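/- arXiv:0801.0170 — 9 statements merged into one kernel-verified Lean document; each statement's English description precedes it below -/
import Mathlib

section
/- Let κ be an infinite cardinal and σ = σ_κ as above. Every ordinal δ can be written uniquely as δ = σ(α₀) + σ(α₁) + ... + σ(α_{n-1}) + Δ where n ∈ ω, |σ(α₀)| > |σ(α₁)| > ... > |σ(α_{n-1})|, α_{n-1} > 0 (if n > 0), and Δ < κ. -/
open Cardinal Set

/-- `NormalForm κ σ δ l Δ` says that `δ = σ α₀ + ⋯ + σ αₙ₋₁ + Δ` where
`l = [α₀, …, αₙ₋₁]`, the cardinalities `|σ αᵢ|` are strictly decreasing,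
the last entry of `l` is positive, and `Δ < κ`. -/
def NormalForm (κ : Cardinal.{0}) (σ : Ordinal.{0} → Ordinal.{0})
    (δ : Ordinal) (l : List Ordinal) (Δ : Ordinal) : Prop :=
  δ = (l.map σ).foldr (· + ·) Δ ∧
  l.Chain' (fun a b => (σ b).card < (σ a).card) ∧
  (∀ a, l.getLast? = some a → 0 < a) ∧
  Δ < κ.ord

/-- Every ordinal has a unique `σ_κ`-normal form. -/
theorem normalForm_exists_unique (κ : Cardinal.{0}) (hκ : ℵ₀ ≤ κ)
    (σ : Ordinal.{0} → Ordinal.{0})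
    (hσ0 : σ 0 = 0) (hσ1 : σ 1 = κ.ord)
    (hσs : ∀ α : Ordinal, 0 < α → σ (α + 1) = σ α + ((σ α).card).ord)
    (hσl : ∀ β : Ordinal, Order.IsSuccLimit β → σ β = sSup (σ '' Set.Iio β)) :
    ∀ δ : Ordinal, ∃! p : List Ordinal × Ordinal, NormalForm κ σ δ p.1 p.2 := by
  -- strict monotonicity of σ on positive ordinals
  have hmono : ∀ α β : Ordinal, 1 ≤ β → β < α → σ β < σ α := by
    intro α
    induction α using Ordinal.induction with
    | _ α IH =>
      intro β hβ1 hβα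
      rcases Ordinal.zero_or_succ_or_isSuccLimit α with h0 | ⟨γ, rfl⟩ | hlim
      · exact absurd (h0 ▸ hβα) (not_lt_of_ge zero_le)
      · rw [← Ordinal.add_one_eq_succ]
        have hβγ : β ≤ γ := Order.lt_succ_iff.mp hβα
        have hγ1 : 1 ≤ γ := hβ1.trans hβγ
        have hγlt : γ < Order.succ γ := Order.lt_succ γ
        have h1γ : σ 1 ≤ σ γ := by
          rcases eq_or_lt_of_le hγ1 with h | h
          · rw [h]
          · exact (IH γ hγlt 1 le_rfl h).le
        have hκγ : κ ≤ (σ γ).card := by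
          have := Ordinal.card_le_card (hσ1 ▸ h1γ)
          rwa [Cardinal.card_ord] at this
        have hstep : σ γ < σ (γ + 1) := by
          rw [hσs γ (lt_of_lt_of_le zero_lt_one hγ1)]
          have hx : (0 : Ordinal) < ((σ γ).card).ord := by
            refine Cardinal.lt_ord.mpr ?_
            simpa using lt_of_lt_of_le (lt_of_lt_of_le Cardinal.aleph0_pos hκ) hκγ
          calc σ γ = σ γ + 0 := (add_zero _).symm
            _ < σ γ + ((σ γ).card).ord := by
                exact add_lt_add_right hx _
        rcases eq_or_lt_of_le hβγ with rfl | h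
        · exact hstep
        · exact (IH γ hγlt β hβ1 h).trans hstep
      · have h1 : Order.succ β < α := hlim.succ_lt hβα
        have h1' : β + 1 < α := by rwa [Ordinal.add_one_eq_succ]
        have h2 : σ β < σ (β + 1) := by
          refine IH (β + 1) h1' β hβ1 ?_
          rw [Ordinal.add_one_eq_succ]; exact Order.lt_succ β
        have h3 : σ (β + 1) ≤ σ α := by
          rw [hσl α hlim]
          exact le_csSup Ordinal.bddAbove_of_small ⟨β + 1, h1', rfl⟩
        exact h2.trans_le h3
  have hmono' : ∀ α β : Ordinal, β ≤ α → σ β ≤ σ α := by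
    intro α β h
    rcases eq_or_lt_of_le h with rfl | h
    · exact le_rfl
    rcases eq_or_ne β 0 with rfl | hβ0
    · rw [hσ0]; exact zero_le
    · exact (hmono α β (Ordinal.one_le_iff_ne_zero.mpr hβ0) h).le
  have hge : ∀ α : Ordinal, 1 ≤ α → κ.ord ≤ σ α := fun α h => hσ1 ▸ hmono' α 1 h
  have hcard : ∀ α : Ordinal, 1 ≤ α → κ ≤ (σ α).card := by
    intro α h
    have := Ordinal.card_le_card (hge α h)
    rwa [Cardinal.card_ord] at this
  have hκord : (0 : Ordinal) < κ.ord := by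
    refine Cardinal.lt_ord.mpr ?_
    simpa using lt_of_lt_of_le Cardinal.aleph0_pos hκ
  have hposσ : ∀ α : Ordinal, 1 ≤ α → 0 < σ α := fun α h => hκord.trans_le (hge α h)
  have hle_self : ∀ α : Ordinal, α ≤ σ α := by
    intro α
    induction α using Ordinal.induction with
    | _ α IH =>
      refine le_of_forall_lt fun β hβ => ?_
      rcases eq_or_ne β 0 with rfl | hβ0
      · exact hposσ α (Order.one_le_iff_pos.mpr hβ)
      · exact lt_of_le_of_lt (IH β hβ) (hmono α β (Ordinal.one_le_iff_ne_zero.mpr hβ0) hβ)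
  -- bound on folds
  have hsum_lt : ∀ (l : List Ordinal) (Δ : Ordinal), Δ < κ.ord →
      ∀ c : Cardinal, κ ≤ c → (∀ a ∈ l, (σ a).card < c) →
      (l.map σ).foldr (· + ·) Δ < c.ord := by
    intro l
    induction l with
    | nil =>
      intro Δ hΔ c hc _
      simpa using lt_of_lt_of_le hΔ (Cardinal.ord_le_ord.mpr hc)
    | cons a t IHl =>
      intro Δ hΔ c hc hlt
      simp only [List.map_cons, List.foldr_cons]
      have h1 : σ a < c.ord := Cardinal.lt_ord.mpr (hlt a (List.mem_cons_self))
      have h2 : (t.map σ).foldr (· + ·) Δ < c.ord :=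
        IHl Δ hΔ c hc fun b hb => hlt b (List.mem_cons_of_mem a hb)
      exact (Ordinal.isPrincipal_add_ord (hκ.trans hc)) h1 h2
  -- all entries of a normal form list are positive
  have hentries : ∀ l : List Ordinal,
      l.Chain' (fun a b => (σ b).card < (σ a).card) →
      (∀ a, l.getLast? = some a → 0 < a) → ∀ a ∈ l, 0 < a := by
    intro l
    induction l with
    | nil => intro _ _ a ha; simp at ha
    | cons a t IHl =>
      intro hch hlast b hb
      rcases t with _ | ⟨c, t'⟩
      · have : b = a := by simpa using hb
        subst this
        exact hlast b (by simp)
      · have hch' := (List.isChain_cons_cons.mp hch).2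
        have hlast' : ∀ x, (c :: t').getLast? = some x → 0 < x := by
          intro x hx
          exact hlast x (by rwa [List.getLast?_cons_cons])
        have hmem : ∀ x ∈ c :: t', 0 < x := IHl hch' hlast'
        rcases List.mem_cons.mp hb with rfl | hb'
        · have hrc : (σ c).card < (σ b).card := (List.isChain_cons_cons.mp hch).1
          have hc1 : 1 ≤ c := Order.one_le_iff_pos.mpr (hmem c (List.mem_cons_self))
          have hcκ : κ ≤ (σ c).card := hcard c hc1
          by_contra h
          push_neg at h
          have hb0 : b = 0 := le_antisymm h zero_le
          rw [hb0, hσ0] at hrc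
          simp at hrc
        · exact hmem b hb'
  intro δ
  induction δ using Ordinal.induction with
  | _ δ IH =>
    by_cases hδ : δ < κ.ord
    · -- small case: normal form is ([], δ)
      refine ⟨([], δ), ⟨by simp, List.isChain_nil, by simp, hδ⟩, ?_⟩
      rintro ⟨l, Δ⟩ ⟨h1, h2, h3, h4⟩
      rcases l with _ | ⟨a, t⟩
      · simp only [List.map_nil, List.foldr_nil] at h1
        simp [h1]
      · exfalso
        have ha : 1 ≤ a := Order.one_le_iff_pos.mpr
          (hentries (a :: t) h2 h3 a (List.mem_cons_self))
        have hσa : σ a ≤ δ := by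
          rw [h1]
          simp only [List.map_cons, List.foldr_cons]
          exact le_self_add
        exact absurd (lt_of_le_of_lt ((hge a ha).trans hσa) hδ) (lt_irrefl _)
    · push_neg at hδ
      set S : Set Ordinal := {α | σ α ≤ δ} with hSdef
      have h1S : (1 : Ordinal) ∈ S := by
        simp only [hSdef, mem_setOf_eq, hσ1]
        exact hδ
      have hSbdd : BddAbove S := ⟨δ, fun α hα => le_trans (hle_self α) hα⟩
      set α₀ := sSup S with hα₀def
      have hα₀1 : 1 ≤ α₀ := le_csSup hSbdd h1S
      have hα₀pos : 0 < α₀ := lt_of_lt_of_le zero_lt_one hα₀1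
      have hα₀S : σ α₀ ≤ δ := by
        rcases Ordinal.zero_or_succ_or_isSuccLimit α₀ with h0 | ⟨γ, hγ⟩ | hlim
        · rw [h0, hσ0]; exact zero_le
        · have hex : ∃ a ∈ S, γ < a := by
            by_contra h
            push_neg at h
            have hle : α₀ ≤ γ := csSup_le ⟨1, h1S⟩ h
            rw [← hγ] at hle
            exact absurd hle (not_le.mpr (Order.lt_succ γ))
          obtain ⟨a, haS, hγa⟩ := hex
          have h1 : a ≤ α₀ := le_csSup hSbdd haS
          have h2 : a = α₀ := le_antisymm h1 (by rw [← hγ]; exact Order.succ_le_of_lt hγa)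
          rw [← h2]; exact haS
        · rw [hσl α₀ hlim]
          refine csSup_le ⟨σ 0, 0, hα₀pos, rfl⟩ ?_
          rintro x ⟨β, hβ, rfl⟩
          obtain ⟨a, haS, hβa⟩ := (lt_csSup_iff hSbdd ⟨1, h1S⟩).mp hβ
          exact (hmono' a β hβa.le).trans haS
      have hα₀succ : δ < σ (α₀ + 1) := by
        by_contra h
        push_neg at h
        have hmem : α₀ + 1 ∈ S := h
        have : α₀ + 1 ≤ α₀ := le_csSup hSbdd hmem
        exact absurd this (not_le.mpr (lt_add_one α₀))
      have hα₀succ' : δ < σ α₀ + ((σ α₀).card).ord := by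
        rwa [hσs α₀ hα₀pos] at hα₀succ
      set ρ := δ - σ α₀ with hρdef
      have hδρ : δ = σ α₀ + ρ := (Ordinal.add_sub_cancel_of_le hα₀S).symm
      have hρc : ρ < ((σ α₀).card).ord := by
        rw [hδρ] at hα₀succ'
        exact lt_of_add_lt_add_left hα₀succ'
      have hρcard : ρ.card < (σ α₀).card := Cardinal.lt_ord.mp hρc
      have hρδ : ρ < δ := by
        by_contra h
        push_neg at h
        have h1 : (σ α₀).card ≤ δ.card := Ordinal.card_le_card hα₀S
        exact absurd (lt_of_lt_of_le hρcard (h1.trans (Ordinal.card_le_card h)))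
          (lt_irrefl _)
      obtain ⟨⟨l, Δ⟩, hNF, huniq⟩ := IH ρ hρδ
      obtain ⟨e1, e2, e3, e4⟩ := hNF
      have hρub : ∀ b ∈ l, σ b ≤ ρ → True := fun _ _ _ => trivial
      refine ⟨(α₀ :: l, Δ), ⟨?_, ?_, ?_, e4⟩, ?_⟩
      · rw [hδρ, e1]
        simp only [List.map_cons, List.foldr_cons]
      · rw [List.Chain', List.isChain_cons]
        refine ⟨?_, e2⟩
        intro b hb
        have hbl : ∃ rest, l = b :: rest := by
          rcases l with _ | ⟨x, rest⟩
          · simp at hb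
          · simp only [List.head?_cons, Option.mem_def, Option.some.injEq] at hb
            exact ⟨rest, by rw [hb]⟩
        obtain ⟨rest, rfl⟩ := hbl
        have hσb : σ b ≤ ρ := by
          rw [e1]
          simp only [List.map_cons, List.foldr_cons]
          exact le_self_add
        exact lt_of_le_of_lt (Ordinal.card_le_card hσb) hρcard
      · intro a ha
        rcases l with _ | ⟨x, t⟩
        · have : α₀ = a := by simpa using ha
          rw [← this]; exact hα₀pos
        · rw [List.getLast?_cons_cons] at ha
          exact e3 a ha
      · -- uniqueness
        rintro ⟨l', Δ'⟩ ⟨f1, f2, f3, f4⟩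
        rcases l' with _ | ⟨β, t⟩
        · exfalso
          simp only [List.map_nil, List.foldr_nil] at f1
          rw [f1] at hδ
          exact absurd (lt_of_le_of_lt hδ f4) (lt_irrefl _)
        · set ρ' := (t.map σ).foldr (· + ·) Δ' with hρ'def
          have hf1 : δ = σ β + ρ' := by
            rw [f1]
            simp only [List.map_cons, List.foldr_cons]
            rfl
          have hβ1 : 1 ≤ β := Order.one_le_iff_pos.mpr
            (hentries (β :: t) f2 f3 β (List.mem_cons_self))
          have htlt : ∀ a ∈ t, (σ a).card < (σ β).card := by
            haveI : IsTrans Ordinal (fun a b => (σ b).card < (σ a).card) :=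
              ⟨fun _ _ _ h1 h2 => h2.trans h1⟩
            have hp := List.isChain_iff_pairwise.mp f2
            exact fun a ha => (List.pairwise_cons.mp hp).1 a ha
          have hρ'lt : ρ' < ((σ β).card).ord :=
            hsum_lt t Δ' f4 ((σ β).card) (hcard β hβ1) htlt
          have hβS : σ β ≤ δ := by rw [hf1]; exact le_self_add
          have hβsucc : δ < σ (β + 1) := by
            rw [hσs β (lt_of_lt_of_le zero_lt_one hβ1), hf1]
            exact add_lt_add_right hρ'lt _
          have hβα₀ : β = α₀ := by
            rcases lt_trichotomy β α₀ with h | h | h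
            · exfalso
              have h1 : β + 1 ≤ α₀ := by
                rw [Ordinal.add_one_eq_succ]; exact Order.succ_le_of_lt h
              exact absurd ((hmono' α₀ (β + 1) h1).trans hα₀S) (not_le.mpr hβsucc)
            · exact h
            · exfalso
              have h1 : α₀ + 1 ≤ β := by
                rw [Ordinal.add_one_eq_succ]; exact Order.succ_le_of_lt h
              exact absurd ((hmono' β (α₀ + 1) h1).trans hβS) (not_le.mpr hα₀succ)
          subst hβα₀
          have hρρ' : ρ = ρ' := by
            have h1 : σ α₀ + ρ = σ α₀ + ρ' := hδρ.symm.trans hf1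
            exact (add_right_inj (σ α₀)).mp h1
          have hlast' : ∀ a, t.getLast? = some a → 0 < a := by
            intro a ha
            rcases t with _ | ⟨x, t'⟩
            · simp at ha
            · exact f3 a (by rwa [List.getLast?_cons_cons])
          have hch' : t.Chain' (fun a b => (σ b).card < (σ a).card) :=
            (List.isChain_cons.mp f2).2
          have hNF' : NormalForm κ σ ρ t Δ' := ⟨hρρ' ▸ rfl, hch', hlast', f4⟩
          have := huniq (t, Δ') hNF'
          have ht : t = l := congrArg Prod.fst this
          have hΔ : Δ' = Δ := congrArg Prod.snd this
          rw [ht, hΔ]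
end

section
/- For every infinite cardinal κ there exists a class function φ : Ord → [Ord × κ]^{<ω} such that (1) φ(α) ⊆ α × κ for every ordinal α, and (2) for every ordinal δ of the form δ = κ·ε there is γ(δ) < δ such that every finite subset of [γ(δ), δ) × κ lies in the image φ''δ = {φ(β) : β < δ}. -/
open Cardinal Set
open Ordinal

noncomputable section

namespace CanonKF

attribute [local instance] Classical.propDecidable

universe u

/-- A set of ordinals admitting a strictly order-reversing map to ordinals is finite. -/
lemma finite_of_strictAntiOn (s : Set Ordinal.{u}) (F : Ordinal.{u} → Ordinal.{u})
    (hF : ∀ x ∈ s, ∀ y ∈ s, x < y → F y < F x) : s.Finite := by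
  by_contra hinf
  replace hinf : s.Infinite := hinf
  have hmax : ∀ t : {t : Set Ordinal.{u} // t.Infinite ∧ t ⊆ s},
      ∃ x, x ∈ t.1 ∧ ∀ y ∈ t.1, y ≤ x := by
    rintro ⟨t, hti, hts⟩
    have hne : (F '' t).Nonempty := hti.nonempty.image F
    obtain ⟨x, hxt, hFx⟩ := csInf_mem hne
    refine ⟨x, hxt, fun y hy => ?_⟩
    by_contra hxy
    push_neg at hxy
    have h1 := hF x (hts hxt) y (hts hy) hxy
    rw [hFx] at h1
    exact absurd (csInf_le' (Set.mem_image_of_mem F hy)) (not_le.2 h1)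
  let step : {t : Set Ordinal.{u} // t.Infinite ∧ t ⊆ s} →
      {t : Set Ordinal.{u} // t.Infinite ∧ t ⊆ s} :=
    fun t => ⟨t.1 \ {(hmax t).choose}, t.2.1.diff (Set.finite_singleton _),
      Set.diff_subset.trans t.2.2⟩
  let T : ℕ → {t : Set Ordinal.{u} // t.Infinite ∧ t ⊆ s} :=
    fun n => step^[n] ⟨s, hinf, subset_rfl⟩
  let m : ℕ → Ordinal.{u} := fun n => (hmax (T n)).choose
  have hdec : ∀ n, m (n + 1) < m n := by
    intro n
    have hT : T (n + 1) = step (T n) := Function.iterate_succ_apply' _ _ _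
    have h1 : m (n + 1) ∈ (T (n + 1)).1 := (hmax (T (n + 1))).choose_spec.1
    rw [hT] at h1
    have h2 : m (n + 1) ∈ (T n).1 := h1.1
    have h3 : m (n + 1) ≠ (hmax (T n)).choose := by
      intro hc
      exact h1.2 (by simp [hc])
    exact lt_of_le_of_ne ((hmax (T n)).choose_spec.2 _ h2) h3
  obtain ⟨n₀, hn₀⟩ := csInf_mem (Set.range_nonempty m)
  have h5 : m (n₀ + 1) < sInf (Set.range m) := by
    rw [← hn₀]; exact hdec n₀
  exact absurd h5 (not_lt.2 (csInf_le' (Set.mem_range_self _)))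

section Main

variable (κ : Cardinal.{0})

/-- `k = κ.ord`, basic facts -/
lemma hK0 (hκ : ℵ₀ ≤ κ) : κ.ord ≠ 0 := by
  have := Cardinal.isSuccLimit_ord hκ
  exact this.pos.ne'

lemma hKlim (hκ : ℵ₀ ≤ κ) : Order.IsSuccLimit κ.ord := Cardinal.isSuccLimit_ord hκ

lemma hK1 (hκ : ℵ₀ ≤ κ) : (1 : Ordinal) < κ.ord := Ordinal.one_lt_of_isSuccLimit (hKlim κ hκ)

lemma mkIio (o : Ordinal.{0}) : #(Set.Iio o) = Cardinal.lift.{1} o.card :=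
  Ordinal.mk_Iio_ordinal o

lemma mkIioK (hκ : ℵ₀ ≤ κ) : #(Set.Iio κ.ord) = Cardinal.lift.{1} κ := by
  rw [mkIio, Cardinal.card_ord]

lemma infIioK (hκ : ℵ₀ ≤ κ) : Infinite (Set.Iio κ.ord) := by
  rw [Cardinal.infinite_iff, mkIioK κ hκ]
  exact Cardinal.aleph0_le_lift.2 hκ

/-- blocks of a finite set -/
def Blocks (A : Finset (Ordinal.{0} × Ordinal.{0})) : Set Ordinal.{0} :=
  ↑(A.image fun a => a.1 / κ.ord)

lemma Blocks_finite (A : Finset (Ordinal.{0} × Ordinal.{0})) : (Blocks κ A).Finite := (A.image _).finite_toSet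

def e1 (A : Finset (Ordinal.{0} × Ordinal.{0})) : Ordinal := sInf (Blocks κ A)
def en (A : Finset (Ordinal.{0} × Ordinal.{0})) : Ordinal := sSup (Blocks κ A)

/-- multi-block sets with values below κ -/
def MB (A : Finset (Ordinal.{0} × Ordinal.{0})) : Prop :=
  (∀ a ∈ A, a.2 < κ.ord) ∧ e1 κ A < en κ A

lemma mem_Blocks {A : Finset (Ordinal.{0} × Ordinal.{0})} {a : Ordinal × Ordinal} (ha : a ∈ A) : a.1 / κ.ord ∈ Blocks κ A := by
  simp only [Blocks, Finset.coe_image, Set.mem_image, Finset.mem_coe]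
  exact ⟨a, ha, rfl⟩

lemma e1_le {A : Finset (Ordinal.{0} × Ordinal.{0})} {a : Ordinal × Ordinal} (ha : a ∈ A) : e1 κ A ≤ a.1 / κ.ord :=
  csInf_le' (mem_Blocks κ ha)

lemma le_en {A : Finset (Ordinal.{0} × Ordinal.{0})} {a : Ordinal × Ordinal} (ha : a ∈ A) : a.1 / κ.ord ≤ en κ A :=
  le_csSup (Blocks_finite κ A).bddAbove (mem_Blocks κ ha)

lemma MB_nonempty {A : Finset (Ordinal.{0} × Ordinal.{0})} (hm : MB κ A) : A.Nonempty := by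
  by_contra h
  rw [Finset.not_nonempty_iff_eq_empty] at h
  subst h
  have : Blocks κ (∅ : Finset (Ordinal × Ordinal)) = ∅ := by
    simp [Blocks]
  have h2 := hm.2
  rw [e1, en, this] at h2
  simp at h2

lemma Blocks_nonempty {A : Finset (Ordinal.{0} × Ordinal.{0})} (hm : MB κ A) : (Blocks κ A).Nonempty := by
  obtain ⟨a, ha⟩ := MB_nonempty κ hm
  exact ⟨_, mem_Blocks κ ha⟩

lemma en_mem {A : Finset (Ordinal.{0} × Ordinal.{0})} (hm : MB κ A) : en κ A ∈ Blocks κ A :=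
  (Blocks_nonempty κ hm).csSup_mem (Blocks_finite κ A)

/-- the scale of a multi-block set -/
def hh (A : Finset (Ordinal.{0} × Ordinal.{0})) : Ordinal :=
  sInf {η : Ordinal | en κ A < e1 κ A + Ordinal.omega0 ^ η}

def gg (A : Finset (Ordinal.{0} × Ordinal.{0})) : Ordinal := Ordinal.pred (hh κ A)

lemma hh_mem (A : Finset (Ordinal.{0} × Ordinal.{0})) : en κ A < e1 κ A + Ordinal.omega0 ^ hh κ A := by
  have hne : {η : Ordinal | en κ A < e1 κ A + Ordinal.omega0 ^ η}.Nonempty := by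
    refine ⟨en κ A + 1, ?_⟩
    have h1 : en κ A + 1 ≤ Ordinal.omega0 ^ (en κ A + 1) :=
      Ordinal.right_le_opow _ Ordinal.one_lt_omega0
    have h2 : en κ A < Ordinal.omega0 ^ (en κ A + 1) :=
      lt_of_lt_of_le (Order.lt_add_one_iff.2 le_rfl) h1
    exact h2.trans_le (le_add_self)
  exact csInf_mem hne

lemma hh_min {A : Finset (Ordinal.{0} × Ordinal.{0})} {η : Ordinal} (hη : η < hh κ A) :
    e1 κ A + Ordinal.omega0 ^ η ≤ en κ A := by
  by_contra h
  push_neg at h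
  exact absurd hη (not_lt.2 (csInf_le' h))

lemma hh_pos {A : Finset (Ordinal.{0} × Ordinal.{0})} (hm : MB κ A) : hh κ A ≠ 0 := by
  intro h0
  have := hh_mem κ A
  rw [h0, Ordinal.opow_zero] at this
  have h2 : en κ A ≤ e1 κ A := by
    rwa [← Order.lt_add_one_iff]
  exact absurd hm.2 (not_lt.2 h2)

lemma hh_not_limit (A : Finset (Ordinal.{0} × Ordinal.{0})) : ¬ Order.IsSuccLimit (hh κ A) := by
  intro hl
  have hN : Order.IsNormal (fun η : Ordinal.{0} => e1 κ A + Ordinal.omega0 ^ η) :=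
    (Ordinal.isNormal_add_right (e1 κ A)).comp (Ordinal.isNormal_opow (a := Ordinal.omega0.{0}) Ordinal.one_lt_omega0)
  have hle : (fun η => e1 κ A + Ordinal.omega0 ^ η) (hh κ A) ≤ en κ A :=
    (hN.le_iff_forall_le hl).2 fun b hb => hh_min κ hb
  exact absurd (hh_mem κ A) (not_lt.2 hle)

lemma hh_eq_succ {A} (hm : MB κ A) : hh κ A = gg κ A + 1 := by
  rcases Ordinal.zero_or_succ_or_isSuccLimit (hh κ A) with h | ⟨g, hg⟩ | h
  · exact absurd h (hh_pos κ hm)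
  · rw [← hg, gg, ← hg, Ordinal.pred_succ, Ordinal.add_one_eq_succ]
  · exact absurd h (hh_not_limit κ A)

def QA (A : Finset (Ordinal.{0} × Ordinal.{0})) : Ordinal := en κ A / Ordinal.omega0 ^ hh κ A
def tA (A : Finset (Ordinal.{0} × Ordinal.{0})) : Ordinal := en κ A % Ordinal.omega0 ^ hh κ A
def cA (A : Finset (Ordinal.{0} × Ordinal.{0})) : Ordinal := κ.ord * (Ordinal.omega0 ^ hh κ A * QA κ A)

lemma opow_ne (o : Ordinal.{0}) : Ordinal.omega0 ^ o ≠ 0 :=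
  (Ordinal.opow_pos o Ordinal.omega0_pos).ne'

lemma en_repr (A : Finset (Ordinal.{0} × Ordinal.{0})) : en κ A = Ordinal.omega0 ^ hh κ A * QA κ A + tA κ A :=
  (Ordinal.div_add_mod _ _).symm

lemma tA_lt (A : Finset (Ordinal.{0} × Ordinal.{0})) : tA κ A < Ordinal.omega0 ^ hh κ A :=
  Ordinal.mod_lt _ (opow_ne _)

/-- same-quotient: the minimal block is at least `ω ^ hh * QA` -/
lemma SQ {A : Finset (Ordinal.{0} × Ordinal.{0})} (hm : MB κ A) : Ordinal.omega0 ^ hh κ A * QA κ A ≤ e1 κ A := by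
  set W := Ordinal.omega0 ^ hh κ A with hW
  have hq : e1 κ A / W ≤ QA κ A := by
    have h1 : e1 κ A ≤ en κ A := hm.2.le
    exact Ordinal.div_le_left h1 W
  rcases eq_or_lt_of_le hq with heq | hlt
  · calc W * QA κ A = W * (e1 κ A / W) := by rw [heq]
      _ ≤ e1 κ A := Ordinal.mul_div_le _ _
  · exfalso
    have h2 : e1 κ A + W = W * (e1 κ A / W + 1) := by
      conv_lhs => rw [← Ordinal.div_add_mod (e1 κ A) W]
      rw [add_assoc, Ordinal.add_omega0_opow (by rw [hW]; exact Ordinal.mod_lt _ (opow_ne _)),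
        mul_add, mul_one]
    have h3 : e1 κ A / W + 1 ≤ QA κ A := by
      rwa [← Order.add_one_le_iff] at hlt
    have h4 : e1 κ A + W ≤ en κ A := by
      rw [h2]
      calc W * (e1 κ A / W + 1) ≤ W * QA κ A := by
            exact mul_le_mul_right h3 W
        _ ≤ en κ A := by rw [en_repr κ A]; exact le_self_add
    exact absurd (hh_mem κ A) (not_lt.2 h4)

lemma block_lower {A : Finset (Ordinal.{0} × Ordinal.{0})} (hm : MB κ A) {a : Ordinal × Ordinal} (ha : a ∈ A) :
    cA κ A ≤ a.1 := by
  have h1 : Ordinal.omega0 ^ hh κ A * QA κ A ≤ a.1 / κ.ord :=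
    (SQ κ hm).trans (e1_le κ ha)
  calc cA κ A = κ.ord * (Ordinal.omega0 ^ hh κ A * QA κ A) := rfl
    _ ≤ κ.ord * (a.1 / κ.ord) := mul_le_mul_right h1 _
    _ ≤ a.1 := Ordinal.mul_div_le _ _

lemma block_upper (hκ : ℵ₀ ≤ κ) {A : Finset (Ordinal.{0} × Ordinal.{0})} (hm : MB κ A) {a : Ordinal × Ordinal} (ha : a ∈ A) :
    a.1 - cA κ A < κ.ord * Ordinal.omega0 ^ hh κ A := by
  have h1 : a.1 < κ.ord * (en κ A + 1) := by
    rw [Ordinal.add_one_eq_succ]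
    exact (Ordinal.div_le (hK0 κ hκ)).1 (le_en κ ha)
  have h2 : en κ A + 1 ≤ Ordinal.omega0 ^ hh κ A * QA κ A + Ordinal.omega0 ^ hh κ A := by
    rw [en_repr κ A, add_assoc]
    exact add_le_add_right (Order.add_one_le_iff.2 (tA_lt κ A)) _
  have h3 : a.1 < cA κ A + κ.ord * Ordinal.omega0 ^ hh κ A := by
    calc a.1 < κ.ord * (en κ A + 1) := h1
      _ ≤ κ.ord * (Ordinal.omega0 ^ hh κ A * QA κ A + Ordinal.omega0 ^ hh κ A) :=
          mul_le_mul_right h2 _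
      _ = cA κ A + κ.ord * Ordinal.omega0 ^ hh κ A := by rw [mul_add]; rfl
  exact Ordinal.sub_lt_of_lt_add h3
    (mul_pos ((pos_iff_ne_zero).2 (hK0 κ hκ)) (Ordinal.opow_pos _ Ordinal.omega0_pos))

end Main
section Gadgets

variable (κ : Cardinal.{0})

/-- pairing equivalence on `Iio κ.ord` -/
def pairE (hκ : ℵ₀ ≤ κ) : Set.Iio κ.ord ≃ (Set.Iio κ.ord × Set.Iio κ.ord) := by
  apply Classical.choice
  rw [← Cardinal.eq, Cardinal.mk_prod, Cardinal.lift_id, mkIioK κ hκ,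
    ← Cardinal.lift_mul, Cardinal.mul_eq_self hκ]

/-- coding of finite subsets of `Iio κ.ord × Iio κ.ord` -/
def sbE (hκ : ℵ₀ ≤ κ) : Set.Iio κ.ord ≃ Finset (Set.Iio κ.ord × Set.Iio κ.ord) := by
  apply Classical.choice
  rw [← Cardinal.eq]
  haveI := infIioK κ hκ
  haveI : Infinite (Set.Iio κ.ord × Set.Iio κ.ord) := Prod.infinite_of_left
  rw [Cardinal.mk_finset_of_infinite, Cardinal.mk_prod, Cardinal.lift_id, mkIioK κ hκ,
    ← Cardinal.lift_mul, Cardinal.mul_eq_self hκ]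

def validD (g : Ordinal.{0}) (D : Finset (Ordinal.{0} × Ordinal.{0})) : Prop :=
  ∀ p ∈ D, p.1 < κ.ord * Ordinal.omega0 ^ (g + 1) ∧ p.2 < κ.ord

def toSubF (g : Ordinal.{0}) (D : {D : Finset (Ordinal.{0} × Ordinal.{0}) // validD κ g D}) :
    Finset (Set.Iio (κ.ord * Ordinal.omega0 ^ (g + 1)) × Set.Iio κ.ord) :=
  D.1.attach.image fun p => (⟨p.1.1, (D.2 p.1 p.2).1⟩, ⟨p.1.2, (D.2 p.1 p.2).2⟩)

lemma mem_toSubF {g : Ordinal.{0}} {D} (q : Set.Iio (κ.ord * Ordinal.omega0 ^ (g + 1)) × Set.Iio κ.ord) :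
    q ∈ toSubF κ g D ↔ (q.1.1, q.2.1) ∈ D.1 := by
  constructor
  · intro hq
    obtain ⟨p, hp, hpe⟩ := Finset.mem_image.1 hq
    have e1 : p.1.1 = q.1.1 := congrArg (fun x => x.1.1) hpe
    have e2 : p.1.2 = q.2.1 := congrArg (fun x => x.2.1) hpe
    have : (q.1.1, q.2.1) = p.1 := by rw [← e1, ← e2]
    rw [this]
    exact p.2
  · intro hq
    refine Finset.mem_image.2 ⟨⟨(q.1.1, q.2.1), hq⟩, Finset.mem_attach _ _, ?_⟩
    refine Prod.ext (Subtype.ext rfl) (Subtype.ext rfl)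

lemma toSubF_inj (g : Ordinal.{0}) : Function.Injective (toSubF κ g) := by
  intro D D' h
  apply Subtype.ext
  ext p
  constructor
  · intro hp
    have hb := D.2 p hp
    have h1 : ((⟨p.1, hb.1⟩, ⟨p.2, hb.2⟩) :
        Set.Iio (κ.ord * Ordinal.omega0 ^ (g + 1)) × Set.Iio κ.ord) ∈ toSubF κ g D :=
      (mem_toSubF κ _).2 hp
    rw [h] at h1
    exact (mem_toSubF κ _).1 h1
  · intro hp
    have hb := D'.2 p hp
    have h1 : ((⟨p.1, hb.1⟩, ⟨p.2, hb.2⟩) :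
        Set.Iio (κ.ord * Ordinal.omega0 ^ (g + 1)) × Set.Iio κ.ord) ∈ toSubF κ g D' :=
      (mem_toSubF κ _).2 hp
    rw [← h] at h1
    exact (mem_toSubF κ _).1 h1

lemma card_emb (hκ : ℵ₀ ≤ κ) (g : Ordinal.{0}) :
    Nonempty ({D : Finset (Ordinal.{0} × Ordinal.{0}) // validD κ g D} ↪
      (Set.Iio (Ordinal.omega0 ^ g) × Set.Iio κ.ord × Set.Iio (Ordinal.omega0 : Ordinal.{0}))) := by
  rw [← Cardinal.le_def]
  have hb : (κ.ord * Ordinal.omega0 ^ (g + 1) : Ordinal) ≠ 0 :=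
    mul_ne_zero (hK0 κ hκ) (opow_ne _)
  have h1 : #{D : Finset (Ordinal.{0} × Ordinal.{0}) // validD κ g D} ≤
      #(Finset (Set.Iio (κ.ord * Ordinal.omega0 ^ (g + 1)) × Set.Iio κ.ord)) := by
    refine Cardinal.mk_le_of_injective (f := toSubF κ g) (toSubF_inj κ g)
  refine h1.trans ?_
  haveI := infIioK κ hκ
  haveI : Nonempty (Set.Iio (κ.ord * Ordinal.omega0 ^ (g + 1))) :=
    ⟨⟨0, pos_iff_ne_zero.2 hb⟩⟩
  haveI : Infinite (Set.Iio (κ.ord * Ordinal.omega0 ^ (g + 1)) × Set.Iio κ.ord) :=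
    Prod.infinite_of_right
  have hc : (Ordinal.omega0 ^ (g + 1)).card = (Ordinal.omega0 ^ g).card * ℵ₀ := by
    rw [Ordinal.add_one_eq_succ, Ordinal.opow_succ, Ordinal.card_mul, Ordinal.card_omega0]
  rw [Cardinal.mk_finset_of_infinite]
  simp only [Cardinal.mk_prod, Cardinal.lift_id, mkIio, Cardinal.card_ord, Ordinal.card_mul,
    Ordinal.card_omega0, hc, ← Cardinal.lift_mul]
  rw [Cardinal.lift_le]
  have key : κ * ((Ordinal.omega0 ^ g).card * ℵ₀) * κ
      = (Ordinal.omega0 ^ g).card * (κ * ℵ₀) := by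
    calc κ * ((Ordinal.omega0 ^ g).card * ℵ₀) * κ
        = (Ordinal.omega0 ^ g).card * (ℵ₀ * (κ * κ)) := by ring
      _ = (Ordinal.omega0 ^ g).card * (ℵ₀ * κ) := by rw [Cardinal.mul_eq_self hκ]
      _ = (Ordinal.omega0 ^ g).card * (κ * ℵ₀) := by ring
  rw [key]

def embF (hκ : ℵ₀ ≤ κ) (g : Ordinal.{0}) (D : Finset (Ordinal.{0} × Ordinal.{0})) :
    Ordinal.{0} × Ordinal.{0} × Ordinal.{0} :=
  if h : validD κ g D then
    let c := (card_emb κ hκ g).some ⟨D, h⟩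
    (c.1.1, c.2.1.1, c.2.2.1)
  else (0, 0, 0)

lemma embF_bounds (hκ : ℵ₀ ≤ κ) {g D} (h : validD κ g D) :
    (embF κ hκ g D).1 < Ordinal.omega0 ^ g ∧ (embF κ hκ g D).2.1 < κ.ord ∧
      (embF κ hκ g D).2.2 < Ordinal.omega0 := by
  rw [embF, dif_pos h]
  exact ⟨((card_emb κ hκ g).some ⟨D, h⟩).1.2, ((card_emb κ hκ g).some ⟨D, h⟩).2.1.2,
    ((card_emb κ hκ g).some ⟨D, h⟩).2.2.2⟩

lemma embF_inj (hκ : ℵ₀ ≤ κ) {g D D'} (h : validD κ g D) (h' : validD κ g D')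
    (he : embF κ hκ g D = embF κ hκ g D') : D = D' := by
  rw [embF, dif_pos h, embF, dif_pos h'] at he
  have h1 : (((card_emb κ hκ g).some ⟨D, h⟩).1 : Set.Iio (Ordinal.omega0 ^ g)) =
      ((card_emb κ hκ g).some ⟨D', h'⟩).1 := Subtype.ext (congrArg Prod.fst he)
  have h2 := Subtype.ext (congrArg (fun x => x.2.1) he :
    (((card_emb κ hκ g).some ⟨D, h⟩).2.1 : Set.Iio κ.ord).1 = _)
  have h3 := Subtype.ext (congrArg (fun x => x.2.2) he :
    (((card_emb κ hκ g).some ⟨D, h⟩).2.2 : Set.Iio (Ordinal.omega0 : Ordinal.{0})).1 = _)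
  have heq : (card_emb κ hκ g).some ⟨D, h⟩ = (card_emb κ hκ g).some ⟨D', h'⟩ := by
    exact Prod.ext h1 (Prod.ext h2 h3)
  have := (card_emb κ hκ g).some.injective heq
  exact congrArg Subtype.val this

end Gadgets
section Code

variable (κ : Cardinal.{0})

/-- translated data of a multi-block set -/
def dataA (A : Finset (Ordinal.{0} × Ordinal.{0})) : Finset (Ordinal.{0} × Ordinal.{0}) :=
  A.image fun a => (a.1 - cA κ A, a.2)

lemma dataA_valid (hκ : ℵ₀ ≤ κ) {A} (hm : MB κ A) : validD κ (gg κ A) (dataA κ A) := by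
  intro p hp
  obtain ⟨a, ha, rfl⟩ := Finset.mem_image.1 hp
  constructor
  · have := block_upper κ hκ hm ha
    rwa [hh_eq_succ κ hm] at this
  · exact hm.1 a ha

def uA (hκ : ℵ₀ ≤ κ) (A : Finset (Ordinal.{0} × Ordinal.{0})) : Ordinal.{0} :=
  (embF κ hκ (gg κ A) (dataA κ A)).1
def slotA (hκ : ℵ₀ ≤ κ) (A : Finset (Ordinal.{0} × Ordinal.{0})) : Ordinal.{0} :=
  (embF κ hκ (gg κ A) (dataA κ A)).2.1
def c0A (hκ : ℵ₀ ≤ κ) (A : Finset (Ordinal.{0} × Ordinal.{0})) : Ordinal.{0} :=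
  (embF κ hκ (gg κ A) (dataA κ A)).2.2

def iA (hκ : ℵ₀ ≤ κ) (A : Finset (Ordinal.{0} × Ordinal.{0})) : Ordinal.{0} :=
  Ordinal.omega0 ^ gg κ A * (c0A κ hκ A + 1) + uA κ hκ A

def vA (hκ : ℵ₀ ≤ κ) (A : Finset (Ordinal.{0} × Ordinal.{0})) : Ordinal.{0} :=
  1 + iA κ hκ A

def tauA (hκ : ℵ₀ ≤ κ) (A : Finset (Ordinal.{0} × Ordinal.{0})) : Ordinal.{0} :=
  en κ A + vA κ hκ A

variable (hκ : ℵ₀ ≤ κ) {A : Finset (Ordinal.{0} × Ordinal.{0})}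

lemma uA_lt (hm : MB κ A) : uA κ hκ A < Ordinal.omega0 ^ gg κ A :=
  (embF_bounds κ hκ (dataA_valid κ hκ hm)).1

lemma slotA_lt (hm : MB κ A) : slotA κ hκ A < κ.ord :=
  (embF_bounds κ hκ (dataA_valid κ hκ hm)).2.1

lemma c0A_lt (hm : MB κ A) : c0A κ hκ A < Ordinal.omega0 :=
  (embF_bounds κ hκ (dataA_valid κ hκ hm)).2.2

lemma iA_lt (hm : MB κ A) : iA κ hκ A < Ordinal.omega0 ^ hh κ A := by
  have h1 : iA κ hκ A < Ordinal.omega0 ^ gg κ A * (c0A κ hκ A + 1 + 1) := by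
    rw [iA, mul_add (Ordinal.omega0 ^ gg κ A) (c0A κ hκ A + 1) 1, mul_one]
    exact add_lt_add_right (uA_lt κ hκ hm) _
  have h2 : c0A κ hκ A + 1 + 1 ≤ Ordinal.omega0 := by
    have h0 := c0A_lt κ hκ hm
    have l := Ordinal.isSuccLimit_omega0
    have h1 : c0A κ hκ A + 1 < Ordinal.omega0 := by
      rw [Ordinal.add_one_eq_succ]; exact l.succ_lt h0
    have h2 : c0A κ hκ A + 1 + 1 < Ordinal.omega0 := by
      rw [Ordinal.add_one_eq_succ]; exact l.succ_lt h1
    exact h2.le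
  calc iA κ hκ A < Ordinal.omega0 ^ gg κ A * (c0A κ hκ A + 1 + 1) := h1
    _ ≤ Ordinal.omega0 ^ gg κ A * Ordinal.omega0 := mul_le_mul_right h2 _
    _ = Ordinal.omega0 ^ hh κ A := by
        rw [hh_eq_succ κ hm, Ordinal.add_one_eq_succ, Ordinal.opow_succ]

lemma iA_ge (hm : MB κ A) : Ordinal.omega0 ^ gg κ A ≤ iA κ hκ A := by
  calc Ordinal.omega0 ^ gg κ A = Ordinal.omega0 ^ gg κ A * 1 := (mul_one _).symm
    _ ≤ Ordinal.omega0 ^ gg κ A * (c0A κ hκ A + 1) :=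
        mul_le_mul_right (by simpa using (le_add_self (a := (1:Ordinal)) (b := c0A κ hκ A))) _
    _ ≤ iA κ hκ A := le_self_add

lemma iA_ne (hm : MB κ A) : iA κ hκ A ≠ 0 := by
  have := (Ordinal.opow_pos (gg κ A) Ordinal.omega0_pos).trans_le (iA_ge κ hκ hm)
  exact this.ne'

lemma one_lt_opow_hh (hm : MB κ A) : 1 < Ordinal.omega0 ^ hh κ A := by
  calc (1 : Ordinal) < Ordinal.omega0 := Ordinal.one_lt_omega0
    _ = Ordinal.omega0 ^ (1 : Ordinal) := (Ordinal.opow_one _).symm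
    _ ≤ Ordinal.omega0 ^ hh κ A := by
        apply Ordinal.opow_le_opow_right Ordinal.omega0_pos
        rw [hh_eq_succ κ hm]
        simpa using (le_add_self (a := (1:Ordinal)) (b := gg κ A))

lemma vA_lt (hm : MB κ A) : vA κ hκ A < Ordinal.omega0 ^ hh κ A :=
  Ordinal.principal_add_omega0_opow _ (one_lt_opow_hh κ hm) (iA_lt κ hκ hm)

lemma small_lt (hm : MB κ A) : tA κ A + vA κ hκ A < Ordinal.omega0 ^ hh κ A :=
  Ordinal.principal_add_omega0_opow _ (tA_lt κ A) (vA_lt κ hκ hm)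

lemma tau_repr (hm : MB κ A) :
    tauA κ hκ A = Ordinal.omega0 ^ hh κ A * QA κ A + (tA κ A + vA κ hκ A) := by
  rw [tauA, en_repr κ A, add_assoc]

lemma tau_div (hm : MB κ A) : tauA κ hκ A / Ordinal.omega0 ^ hh κ A = QA κ A := by
  rw [tau_repr κ hκ hm, Ordinal.mul_add_div _ (opow_ne _),
    Ordinal.div_eq_zero_of_lt (small_lt κ hκ hm), add_zero]

lemma en_lt_tau (hm : MB κ A) : en κ A < tauA κ hκ A := by
  rw [tauA]
  conv_lhs => rw [← add_zero (en κ A)]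
  apply add_lt_add_right
  rw [vA]
  exact lt_of_lt_of_le zero_lt_one (le_self_add)

lemma log_iA (hm : MB κ A) : Ordinal.log Ordinal.omega0 (iA κ hκ A) = gg κ A := by
  apply le_antisymm
  · have h2 := iA_lt κ hκ hm
    rw [hh_eq_succ κ hm] at h2
    have := (Ordinal.lt_opow_iff_log_lt Ordinal.one_lt_omega0 (iA_ne κ hκ hm)).1 h2
    exact Order.lt_add_one_iff.1 this
  · exact (Ordinal.opow_le_iff_le_log Ordinal.one_lt_omega0 (iA_ne κ hκ hm)).1 (iA_ge κ hκ hm)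

lemma iA_div (hm : MB κ A) :
    iA κ hκ A / Ordinal.omega0 ^ gg κ A = c0A κ hκ A + 1 := by
  rw [iA, Ordinal.mul_add_div _ (opow_ne _), Ordinal.div_eq_zero_of_lt (uA_lt κ hκ hm), add_zero]

lemma iA_mod (hm : MB κ A) :
    iA κ hκ A % Ordinal.omega0 ^ gg κ A = uA κ hκ A := by
  rw [iA, Ordinal.mul_add_mod_self, Ordinal.mod_eq_of_lt (uA_lt κ hκ hm)]

lemma A_from_data (hm : MB κ A) :
    A = (dataA κ A).image fun q => (cA κ A + q.1, q.2) := by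
  rw [dataA, Finset.image_image]
  symm
  have : ∀ a ∈ A, ((fun q => (cA κ A + q.1, q.2)) ∘ fun a => (a.1 - cA κ A, a.2)) a = id a := by
    intro a ha
    simp only [Function.comp_apply, id_eq]
    rw [Ordinal.add_sub_cancel_of_le (block_lower κ hm ha)]
  rw [Finset.image_congr this, Finset.image_id]

end Code
section Fiber

variable (κ : Cardinal.{0})

/-- the tails of an ordinal under left addition -/
def Tails (ε : Ordinal.{0}) : Set Ordinal.{0} := {v | ∃ a, a + v = ε}

lemma Tails_finite (ε : Ordinal.{0}) : (Tails ε).Finite := by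
  apply finite_of_strictAntiOn (F := fun v => sInf {a | a + v = ε})
  intro x hx y hy hxy
  obtain ⟨ax, hax⟩ := hx
  obtain ⟨ay, hay⟩ := hy
  have hmemy : sInf {a | a + y = ε} ∈ {a | a + y = ε} := csInf_mem ⟨ay, hay⟩
  set w := sInf {a | a + y = ε} with hw
  have key : ∀ b ∈ {a | a + x = ε}, w < b := by
    intro b hb
    by_contra hc
    push_neg at hc
    have hd : b + (w - b) = w := Ordinal.add_sub_cancel_of_le hc
    have h1 : b + ((w - b) + y) = ε := by
      rw [← add_assoc, hd]; exact hmemy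
    have h2 : (w - b) + y = x := by
      have h3 : b + ((w - b) + y) = b + x := by rw [h1]; exact hb.symm
      exact (add_right_inj _).1 h3
    have : y ≤ x := h2 ▸ (le_add_self (a := y) (b := w - b))
    exact absurd hxy (not_lt.2 this)
  exact key _ (csInf_mem ⟨ax, hax⟩)

/-- the fiber of the coding function over a block -/
def Fib (hκ : ℵ₀ ≤ κ) (ε : Ordinal.{0}) : Type 1 :=
  {A : Finset (Ordinal.{0} × Ordinal.{0}) // MB κ A ∧ tauA κ hκ A = ε}

lemma fib_card (hκ : ℵ₀ ≤ κ) (ε : Ordinal.{0}) :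
    #(Fib κ hκ ε) ≤ Cardinal.lift.{1} κ := by
  have hinj : Function.Injective (fun A : Fib κ hκ ε =>
      ((⟨vA κ hκ A.1, ⟨en κ A.1, A.2.2⟩⟩ : Tails ε),
        (⟨slotA κ hκ A.1, slotA_lt κ hκ A.2.1⟩ : Set.Iio κ.ord))) := by
    intro A A' h
    have hm := A.2.1
    have hm' := A'.2.1
    have hv : vA κ hκ A.1 = vA κ hκ A'.1 :=
      congrArg Subtype.val (congrArg Prod.fst h)
    have hs : slotA κ hκ A.1 = slotA κ hκ A'.1 :=
      congrArg Subtype.val (congrArg Prod.snd h)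
    have hi : iA κ hκ A.1 = iA κ hκ A'.1 := by
      have := hv
      rw [vA, vA] at this
      exact (add_right_inj _).1 this
    have hg : gg κ A.1 = gg κ A'.1 := by
      rw [← log_iA κ hκ hm, ← log_iA κ hκ hm', hi]
    have hhh : hh κ A.1 = hh κ A'.1 := by
      rw [hh_eq_succ κ hm, hh_eq_succ κ hm', hg]
    have hQ : QA κ A.1 = QA κ A'.1 := by
      rw [← tau_div κ hκ hm, ← tau_div κ hκ hm', A.2.2, A'.2.2, hhh]
    have hcA : cA κ A.1 = cA κ A'.1 := by
      rw [cA, cA, hhh, hQ]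
    have hc0 : c0A κ hκ A.1 = c0A κ hκ A'.1 := by
      have h1 := iA_div κ hκ hm
      have h2 := iA_div κ hκ hm'
      rw [← hg, ← hi] at h2
      have h3 : c0A κ hκ A.1 + 1 = c0A κ hκ A'.1 + 1 := by rw [← h1, ← h2]
      rw [Ordinal.add_one_eq_succ, Ordinal.add_one_eq_succ] at h3
      exact Order.succ_injective h3
    have hu : uA κ hκ A.1 = uA κ hκ A'.1 := by
      rw [← iA_mod κ hκ hm, ← iA_mod κ hκ hm', hi, hg]
    have hemb : embF κ hκ (gg κ A.1) (dataA κ A.1) = embF κ hκ (gg κ A.1) (dataA κ A'.1) := by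
      calc embF κ hκ (gg κ A.1) (dataA κ A.1)
          = (uA κ hκ A.1, slotA κ hκ A.1, c0A κ hκ A.1) := rfl
        _ = (uA κ hκ A'.1, slotA κ hκ A'.1, c0A κ hκ A'.1) := by rw [hu, hs, hc0]
        _ = embF κ hκ (gg κ A'.1) (dataA κ A'.1) := rfl
        _ = embF κ hκ (gg κ A.1) (dataA κ A'.1) := by rw [hg]
    have hval' : validD κ (gg κ A.1) (dataA κ A'.1) := by
      rw [hg]; exact dataA_valid κ hκ hm'
    have hdata : dataA κ A.1 = dataA κ A'.1 :=
      embF_inj κ hκ (dataA_valid κ hκ hm) hval' hemb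
    apply Subtype.ext
    rw [A_from_data κ hm, A_from_data κ hm', hdata, hcA]
  have h1 : #(Fib κ hκ ε) ≤ #(Tails ε × Set.Iio κ.ord) := Cardinal.mk_le_of_injective hinj
  refine h1.trans ?_
  rw [Cardinal.mk_prod]
  simp only [Cardinal.lift_id]
  rw [mkIioK κ hκ]
  have h2 : #(Tails ε) ≤ ℵ₀ := (Tails_finite ε).lt_aleph0.le
  calc #(Tails ε) * Cardinal.lift.{1} κ ≤ ℵ₀ * Cardinal.lift.{1} κ :=
        mul_le_mul_left h2 _
    _ = Cardinal.lift.{1} κ := by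
        rw [Cardinal.mul_eq_max le_rfl (Cardinal.aleph0_le_lift.2 hκ)]
        exact max_eq_right (Cardinal.aleph0_le_lift.2 hκ)

def J (hκ : ℵ₀ ≤ κ) (ε : Ordinal.{0}) : Fib κ hκ ε ↪ Set.Iio κ.ord := by
  apply Classical.choice
  rw [← Cardinal.le_def, mkIioK κ hκ]
  exact fib_card κ hκ ε

end Fiber
section Phi

variable (κ : Cardinal.{0})

lemma mod_self_lt (hκ : ℵ₀ ≤ κ) (β : Ordinal.{0}) : β % κ.ord < κ.ord :=
  Ordinal.mod_lt β (hK0 κ hκ)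

/-- the canonical κ-function -/
def phi (hκ : ℵ₀ ≤ κ) (β : Ordinal.{0}) : Finset (Ordinal.{0} × Ordinal.{0}) :=
  if (pairE κ hκ ⟨β % κ.ord, mod_self_lt κ hκ β⟩).1.1 = 0 then
    (if ∀ q ∈ sbE κ hκ (pairE κ hκ (pairE κ hκ ⟨β % κ.ord, mod_self_lt κ hκ β⟩).2).2,
        q.1.1 < β % κ.ord then
      (sbE κ hκ (pairE κ hκ (pairE κ hκ ⟨β % κ.ord, mod_self_lt κ hκ β⟩).2).2).image
        fun q => (κ.ord * (β / κ.ord) + q.1.1, q.2.1)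
    else ∅)
  else if (pairE κ hκ ⟨β % κ.ord, mod_self_lt κ hκ β⟩).1.1 = 1 then
    (if h : ∃ A : Fib κ hκ (β / κ.ord),
        J κ hκ (β / κ.ord) A = (pairE κ hκ ⟨β % κ.ord, mod_self_lt κ hκ β⟩).2 then
      h.choose.1
    else ∅)
  else ∅

/-- condition (1) -/
lemma phi_cond1 (hκ : ℵ₀ ≤ κ) (β : Ordinal.{0}) :
    ∀ a ∈ phi κ hκ β, a.1 < β ∧ a.2 < κ.ord := by
  intro a ha
  rw [phi] at ha
  by_cases h0 : (pairE κ hκ ⟨β % κ.ord, mod_self_lt κ hκ β⟩).1.1 = 0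
  · rw [if_pos h0] at ha
    by_cases hg : ∀ q ∈ sbE κ hκ (pairE κ hκ (pairE κ hκ ⟨β % κ.ord, mod_self_lt κ hκ β⟩).2).2,
        q.1.1 < β % κ.ord
    · rw [if_pos hg] at ha
      obtain ⟨q, hq, rfl⟩ := Finset.mem_image.1 ha
      constructor
      · have h2 : κ.ord * (β / κ.ord) + q.1.1 < κ.ord * (β / κ.ord) + β % κ.ord :=
          add_lt_add_right (hg q hq) _
        rwa [Ordinal.div_add_mod] at h2
      · exact q.2.2
    · rw [if_neg hg] at ha
      exact absurd ha (Finset.notMem_empty a)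
  · rw [if_neg h0] at ha
    by_cases h1 : (pairE κ hκ ⟨β % κ.ord, mod_self_lt κ hκ β⟩).1.1 = 1
    · rw [if_pos h1] at ha
      by_cases hex : ∃ A : Fib κ hκ (β / κ.ord),
          J κ hκ (β / κ.ord) A = (pairE κ hκ ⟨β % κ.ord, mod_self_lt κ hκ β⟩).2
      · rw [dif_pos hex] at ha
        obtain ⟨hm, hτ⟩ := hex.choose.2
        constructor
        · have h2 : a.1 / κ.ord ≤ en κ hex.choose.1 := le_en κ ha
          have h3 : a.1 / κ.ord < β / κ.ord := by
            rw [← hτ]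
            exact h2.trans_lt (en_lt_tau κ hκ hm)
          have h4 : a.1 < κ.ord * (β / κ.ord) := (Ordinal.div_lt (hK0 κ hκ)).1 h3
          have h5 : κ.ord * (β / κ.ord) ≤ β := by
            conv_rhs => rw [← Ordinal.div_add_mod β κ.ord]
            exact le_self_add
          exact h4.trans_le h5
        · exact hm.1 a ha
      · rw [dif_neg hex] at ha
        exact absurd ha (Finset.notMem_empty a)
    · rw [if_neg h1] at ha
      exact absurd ha (Finset.notMem_empty a)

end Phi
section Tail

/-- canonical final-indecomposable-segment decomposition of a nonzero ordinal -/
lemma exists_tail (e : Ordinal.{0}) (he : e ≠ 0) :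
    ∃ ηs lam : Ordinal.{0}, lam + Ordinal.omega0 ^ ηs = e ∧ Ordinal.omega0 ^ ηs ∣ e ∧
      ∀ a : Ordinal.{0}, Ordinal.omega0 ^ a ∣ e → a ≤ ηs := by
  set S : Set Ordinal.{0} := {η | Ordinal.omega0 ^ η ∣ e} with hSdef
  have hS0 : (0 : Ordinal.{0}) ∈ S := by
    simp only [hSdef, Set.mem_setOf_eq, Ordinal.opow_zero]
    exact one_dvd e
  have hbdd : BddAbove S := by
    refine ⟨e, fun η hη => ?_⟩
    exact (Ordinal.right_le_opow η Ordinal.one_lt_omega0).trans (Ordinal.le_of_dvd he hη)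
  set ηs := sSup S with hηs
  have hub : ∀ a : Ordinal.{0}, Ordinal.omega0 ^ a ∣ e → a ≤ ηs :=
    fun a ha => le_csSup hbdd ha
  have hdvd : Ordinal.omega0 ^ ηs ∣ e := by
    by_contra hnd
    have hr : e % Ordinal.omega0 ^ ηs ≠ 0 := fun h => hnd (Ordinal.dvd_of_mod_eq_zero h)
    have hrlt : e % Ordinal.omega0 ^ ηs < Ordinal.omega0 ^ ηs := Ordinal.mod_lt e (opow_ne _)
    have hlog : Ordinal.log Ordinal.omega0 (e % Ordinal.omega0 ^ ηs) < ηs :=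
      (Ordinal.lt_opow_iff_log_lt Ordinal.one_lt_omega0 hr).1 hrlt
    obtain ⟨η, hηS, hlt⟩ := exists_lt_of_lt_csSup ⟨0, hS0⟩ hlog
    have hrη : e % Ordinal.omega0 ^ ηs < Ordinal.omega0 ^ η :=
      Ordinal.lt_opow_of_log_lt Ordinal.one_lt_omega0 hlt
    have hd1 : Ordinal.omega0 ^ η ∣ Ordinal.omega0 ^ ηs * (e / Ordinal.omega0 ^ ηs) :=
      dvd_mul_of_dvd_left (Ordinal.opow_dvd_opow _ (hub η hηS)) _
    have hd3 : Ordinal.omega0 ^ η ∣ e % Ordinal.omega0 ^ ηs := by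
      have hsplit : Ordinal.omega0 ^ ηs * (e / Ordinal.omega0 ^ ηs) + e % Ordinal.omega0 ^ ηs
          = e := Ordinal.div_add_mod e _
      exact (Ordinal.dvd_add_iff hd1).1 (by rw [hsplit]; exact hηS)
    exact absurd (Ordinal.le_of_dvd hr hd3) (not_le.2 hrη)
  obtain ⟨c, hc⟩ := hdvd
  have hc0 : c ≠ 0 := by
    rintro rfl
    rw [mul_zero] at hc
    exact he hc
  have hcnl : ¬ Order.IsSuccLimit c := by
    intro hl
    have hmod : c % Ordinal.omega0 = 0 := by
      by_contra hm
      have hlt : c % Ordinal.omega0 < Ordinal.omega0 := Ordinal.mod_lt c Ordinal.omega0_ne_zero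
      obtain ⟨n, hn⟩ := Ordinal.lt_omega0.1 hlt
      rcases n with _ | m
      · rw [hn] at hm; simp at hm
      · have hrepr : Ordinal.omega0 * (c / Ordinal.omega0) + c % Ordinal.omega0 = c :=
          Ordinal.div_add_mod c _
        have heq : c = (Ordinal.omega0 * (c / Ordinal.omega0) + (m : Ordinal.{0})) + 1 := by
          conv_lhs => rw [← hrepr]
          rw [hn, Nat.cast_succ, add_assoc]
        have hxlt : Ordinal.omega0 * (c / Ordinal.omega0) + (m : Ordinal.{0}) < c := by
          conv_rhs => rw [heq, Ordinal.add_one_eq_succ]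
          exact Order.lt_succ _
        have hsl := hl.succ_lt hxlt
        rw [← Ordinal.add_one_eq_succ, ← heq] at hsl
        exact lt_irrefl c hsl
    obtain ⟨c2, hc2⟩ := Ordinal.dvd_of_mod_eq_zero hmod
    have hd4 : Ordinal.omega0 ^ (ηs + 1) ∣ e := by
      rw [hc, hc2, Ordinal.add_one_eq_succ, Ordinal.opow_succ, ← mul_assoc]
      exact dvd_mul_right _ _
    have := hub _ hd4
    exact absurd this (not_le.2 (Order.lt_add_one_iff.2 le_rfl))
  rcases Ordinal.zero_or_succ_or_isSuccLimit c with h | ⟨E', hE'⟩ | h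
  · exact absurd h hc0
  · refine ⟨ηs, Ordinal.omega0 ^ ηs * E', ?_, ⟨c, hc⟩, hub⟩
    rw [hc, ← hE', Ordinal.mul_succ]
  · exact absurd h hcnl

end Tail
section CodeAbove

variable (κ : Cardinal.{0})

lemma exists_code_above (hκ : ℵ₀ ≤ κ) (F : Finset (Set.Iio κ.ord × Set.Iio κ.ord))
    (b : Ordinal.{0}) (hb : b < κ.ord) :
    ∃ ρ : Set.Iio κ.ord, b < ρ.1 ∧ (pairE κ hκ ρ).1.1 = 0 ∧
      sbE κ hκ (pairE κ hκ (pairE κ hκ ρ).2).2 = F := by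
  have h0K : (0 : Ordinal.{0}) < κ.ord := pos_iff_ne_zero.2 (hK0 κ hκ)
  set z0 : Set.Iio κ.ord := ⟨0, h0K⟩ with hz0
  set f : Set.Iio κ.ord → Set.Iio κ.ord := fun z =>
    (pairE κ hκ).symm (z0, (pairE κ hκ).symm (z, (sbE κ hκ).symm F)) with hf
  have hfp : ∀ z, pairE κ hκ (f z) = (z0, (pairE κ hκ).symm (z, (sbE κ hκ).symm F)) :=
    fun z => Equiv.apply_symm_apply _ _
  have hfgood : ∀ z, (pairE κ hκ (f z)).1.1 = 0 ∧
      sbE κ hκ (pairE κ hκ (pairE κ hκ (f z)).2).2 = F := by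
    intro z
    rw [hfp z]
    constructor
    · rfl
    · rw [show ((z0, (pairE κ hκ).symm (z, (sbE κ hκ).symm F)).2) =
        (pairE κ hκ).symm (z, (sbE κ hκ).symm F) from rfl, Equiv.apply_symm_apply]
      exact Equiv.apply_symm_apply _ _
  have hfinj : Function.Injective f := by
    intro z z' h
    have h1 := congrArg (pairE κ hκ) h
    rw [hfp z, hfp z'] at h1
    have h2 := congrArg Prod.snd h1
    simp only at h2
    have h3 := (pairE κ hκ).symm.injective h2
    exact congrArg Prod.fst h3
  by_contra hc
  push_neg at hc
  have hall : ∀ z : Set.Iio κ.ord, (f z).1 ≤ b := by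
    intro z
    by_contra hz
    push_neg at hz
    exact absurd ((hfgood z).2) (by
      have := hc (f z) hz (hfgood z).1
      exact this)
  have hble : b + 1 < κ.ord := by
    rw [Ordinal.add_one_eq_succ]
    exact (hKlim κ hκ).succ_lt hb
  have hinj2 : Function.Injective (fun z : Set.Iio κ.ord =>
      (⟨(f z).1, lt_of_le_of_lt (hall z) (lt_of_lt_of_le (Order.lt_succ b)
        (by rw [← Ordinal.add_one_eq_succ]))⟩ : Set.Iio (b + 1))) := by
    intro z z' h
    exact hfinj (Subtype.ext (Subtype.mk_eq_mk.1 h))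
  have hle : #(Set.Iio κ.ord) ≤ #(Set.Iio (b + 1)) := Cardinal.mk_le_of_injective hinj2
  rw [mkIioK κ hκ, mkIio, Cardinal.lift_le] at hle
  have hlt : (b + 1).card < κ := Cardinal.lt_ord.1 hble
  exact absurd hle (not_le.2 hlt)

lemma div_mod_of (hκ : ℵ₀ ≤ κ) (ε r : Ordinal.{0}) (hr : r < κ.ord) :
    (κ.ord * ε + r) / κ.ord = ε ∧ (κ.ord * ε + r) % κ.ord = r := by
  constructor
  · rw [Ordinal.mul_add_div ε (hK0 κ hκ) r, Ordinal.div_eq_zero_of_lt hr, add_zero]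
  · rw [Ordinal.mul_add_mod_self, Ordinal.mod_eq_of_lt hr]

end CodeAbove
section MainLemma

variable (κ : Cardinal.{0})

lemma phi_zero (hκ : ℵ₀ ≤ κ) : phi κ hκ 0 = ∅ := by
  rw [phi]
  by_cases h0 : (pairE κ hκ ⟨0 % κ.ord, mod_self_lt κ hκ 0⟩).1.1 = 0
  · rw [if_pos h0]
    by_cases hg : ∀ q ∈ sbE κ hκ (pairE κ hκ (pairE κ hκ ⟨0 % κ.ord, mod_self_lt κ hκ 0⟩).2).2,
        q.1.1 < (0 : Ordinal.{0}) % κ.ord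
    · rw [if_pos hg]
      have hF : sbE κ hκ (pairE κ hκ (pairE κ hκ ⟨0 % κ.ord, mod_self_lt κ hκ 0⟩).2).2 = ∅ := by
        rw [Finset.eq_empty_iff_forall_notMem]
        intro q hq
        have := hg q hq
        rw [Ordinal.zero_mod] at this
        exact absurd this not_lt_zero
      rw [hF, Finset.image_empty]
    · rw [if_neg hg]
  · rw [if_neg h0]
    by_cases h1 : (pairE κ hκ ⟨0 % κ.ord, mod_self_lt κ hκ 0⟩).1.1 = 1
    · rw [if_pos h1]
      by_cases hex : ∃ A : Fib κ hκ ((0 : Ordinal.{0}) / κ.ord),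
          J κ hκ ((0 : Ordinal.{0}) / κ.ord) A = (pairE κ hκ ⟨0 % κ.ord, mod_self_lt κ hκ 0⟩).2
      · exfalso
        obtain ⟨B, _⟩ := hex
        obtain ⟨hm, hτ⟩ := B.2
        have hτ' : tauA κ hκ B.1 = 0 := hτ.trans (Ordinal.zero_div κ.ord)
        have h5 := en_lt_tau κ hκ hm
        rw [hτ'] at h5
        exact absurd h5 not_lt_zero
      · rw [dif_neg hex]
    · rw [if_neg h1]

set_option maxHeartbeats 2000000 in
lemma main2 (hκ : ℵ₀ ≤ κ) (e : Ordinal.{0}) (he : e ≠ 0) :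
    ∃ γ < κ.ord * e, ∀ A : Finset (Ordinal.{0} × Ordinal.{0}),
      (∀ a ∈ A, γ ≤ a.1 ∧ a.1 < κ.ord * e ∧ a.2 < κ.ord) →
      ∃ β < κ.ord * e, phi κ hκ β = A := by
  obtain ⟨ηs, lam, hlam, hdvd, hub⟩ := exists_tail e he
  have hWpos : (0 : Ordinal.{0}) < Ordinal.omega0 ^ ηs := Ordinal.opow_pos ηs Ordinal.omega0_pos
  have hlam_lt : lam < e := by
    conv_rhs => rw [← hlam]
    calc lam = lam + 0 := (add_zero _).symm
      _ < lam + Ordinal.omega0 ^ ηs := add_lt_add_right hWpos _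
  refine ⟨κ.ord * lam, mul_lt_mul_of_pos_left hlam_lt
    (pos_iff_ne_zero.2 (hK0 κ hκ)), ?_⟩
  intro A hA
  by_cases hAe : A = ∅
  · refine ⟨0, pos_iff_ne_zero.2 (mul_ne_zero (hK0 κ hκ) he), ?_⟩
    rw [phi_zero κ hκ, hAe]
  have hAne : A.Nonempty := Finset.nonempty_iff_ne_empty.2 hAe
  have hBne : (Blocks κ A).Nonempty := ⟨_, mem_Blocks κ hAne.choose_spec⟩
  have hlt_e : ∀ a ∈ A, a.1 / κ.ord < e :=
    fun a ha => (Ordinal.div_lt (hK0 κ hκ)).2 (hA a ha).2.1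
  have hge_lam : ∀ a ∈ A, lam ≤ a.1 / κ.ord :=
    fun a ha => (Ordinal.le_div (hK0 κ hκ)).2 (hA a ha).1
  have hen_mem : en κ A ∈ Blocks κ A := hBne.csSup_mem (Blocks_finite κ A)
  have hen_lt : en κ A < e := by
    obtain ⟨a, ha, hae⟩ : ∃ a ∈ A, a.1 / κ.ord = en κ A := by
      simpa [Blocks, Finset.mem_image] using hen_mem
    rw [← hae]
    exact hlt_e a ha
  by_cases hsm : e1 κ A = en κ A
  · -- single-block case
    have hq_eq : ∀ a ∈ A, a.1 / κ.ord = en κ A := by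
      intro a ha
      refine le_antisymm (le_en κ ha) ?_
      rw [← hsm]
      exact e1_le κ ha
    have hGfin : ((fun a : Ordinal.{0} × Ordinal.{0} => a.1 % κ.ord) '' ↑A).Finite :=
      A.finite_toSet.image _
    have hGne : ((fun a : Ordinal.{0} × Ordinal.{0} => a.1 % κ.ord) '' ↑A).Nonempty := by
      obtain ⟨a, ha⟩ := hAne
      exact ⟨a.1 % κ.ord, ⟨a, ha, rfl⟩⟩
    set ξ := sSup ((fun a : Ordinal.{0} × Ordinal.{0} => a.1 % κ.ord) '' ↑A) with hξ
    have hξκ : ξ < κ.ord := by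
      have hmem := hGne.csSup_mem hGfin
      obtain ⟨a, ha, hae⟩ := hmem
      rw [← hξ] at hae
      rw [← hae]
      exact Ordinal.mod_lt _ (hK0 κ hκ)
    have hξle : ∀ a ∈ A, a.1 % κ.ord ≤ ξ := by
      intro a ha
      exact le_csSup hGfin.bddAbove ⟨a, ha, rfl⟩
    set F : Finset (Set.Iio κ.ord × Set.Iio κ.ord) := A.attach.image fun a =>
      ((⟨a.1.1 % κ.ord, Ordinal.mod_lt _ (hK0 κ hκ)⟩ : Set.Iio κ.ord),
        (⟨a.1.2, (hA a.1 a.2).2.2⟩ : Set.Iio κ.ord)) with hFdef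
    obtain ⟨ρ, hρb, hρ0, hρF⟩ := exists_code_above κ hκ F ξ hξκ
    refine ⟨κ.ord * en κ A + ρ.1, ?_, ?_⟩
    · have h1 : κ.ord * en κ A + ρ.1 < κ.ord * (en κ A + 1) := by
        rw [mul_add, mul_one]
        exact add_lt_add_right ρ.2 _
      have h2 : en κ A + 1 ≤ e := by
        rw [Ordinal.add_one_eq_succ, Order.succ_le_iff]
        exact hen_lt
      exact h1.trans_le (mul_le_mul_right h2 _)
    · obtain ⟨hdiv, hmod⟩ := div_mod_of κ hκ (en κ A) ρ.1 ρ.2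
      rw [phi]
      have hsub : (⟨(κ.ord * en κ A + ρ.1) % κ.ord,
          mod_self_lt κ hκ (κ.ord * en κ A + ρ.1)⟩ : Set.Iio κ.ord) = ρ := Subtype.ext hmod
      rw [hsub, hdiv, hmod, if_pos hρ0, hρF]
      have hguard : ∀ q ∈ F, q.1.1 < ρ.1 := by
        intro q hq
        rw [hFdef] at hq
        obtain ⟨a, _, hae⟩ := Finset.mem_image.1 hq
        have : a.1.1 % κ.ord = q.1.1 := congrArg (fun x => x.1.1) hae
        rw [← this]
        exact lt_of_le_of_lt (hξle a.1 a.2) hρb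
      rw [if_pos hguard, hFdef, Finset.image_image]
      have hptw : ∀ p ∈ A.attach,
          ((fun q : Set.Iio κ.ord × Set.Iio κ.ord => (κ.ord * en κ A + q.1.1, q.2.1)) ∘
            fun a : {x // x ∈ A} =>
              ((⟨a.1.1 % κ.ord, Ordinal.mod_lt _ (hK0 κ hκ)⟩ : Set.Iio κ.ord),
                (⟨a.1.2, (hA a.1 a.2).2.2⟩ : Set.Iio κ.ord))) p = p.1 := by
        intro p _
        simp only [Function.comp_apply]
        have : κ.ord * en κ A + p.1.1 % κ.ord = p.1.1 := by
          conv_rhs => rw [← Ordinal.div_add_mod p.1.1 κ.ord]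
          rw [hq_eq p.1 p.2]
        rw [this]
      rw [Finset.image_congr hptw]
      simp [Finset.attach_image_val]
  · -- multi-block case
    have hm : MB κ A := by
      refine ⟨fun a ha => (hA a ha).2.2, lt_of_le_of_ne ?_ hsm⟩
      exact csInf_le' hen_mem
    have hlam_e1 : lam ≤ e1 κ A := by
      apply le_csInf hBne
      intro b hb
      obtain ⟨a, ha, hae⟩ : ∃ a ∈ A, a.1 / κ.ord = b := by
        simpa [Blocks, Finset.mem_image] using hb
      rw [← hae]
      exact hge_lam a ha
    have hhle : hh κ A ≤ ηs := by
      apply csInf_le'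
      show en κ A < e1 κ A + Ordinal.omega0 ^ ηs
      calc en κ A < e := hen_lt
        _ = lam + Ordinal.omega0 ^ ηs := hlam.symm
        _ ≤ e1 κ A + Ordinal.omega0 ^ ηs := add_le_add_left hlam_e1 _
    have hdvd2 : Ordinal.omega0 ^ hh κ A ∣ e :=
      dvd_trans (Ordinal.opow_dvd_opow _ hhle) hdvd
    obtain ⟨E2, hE2⟩ := hdvd2
    have hQlt : QA κ A < E2 := by
      by_contra hcon
      push_neg at hcon
      have h1 : e ≤ Ordinal.omega0 ^ hh κ A * QA κ A := by
        rw [hE2]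
        exact mul_le_mul_right hcon _
      have h2 : e ≤ en κ A := by
        refine h1.trans ?_
        rw [en_repr κ A]
        exact le_self_add
      exact absurd hen_lt (not_lt.2 h2)
    have htau_lt : tauA κ hκ A < e := by
      rw [tau_repr κ hκ hm, hE2]
      calc Ordinal.omega0 ^ hh κ A * QA κ A + (tA κ A + vA κ hκ A)
          < Ordinal.omega0 ^ hh κ A * QA κ A + Ordinal.omega0 ^ hh κ A :=
            add_lt_add_right (small_lt κ hκ hm) _
        _ = Ordinal.omega0 ^ hh κ A * (QA κ A + 1) := by rw [mul_add, mul_one]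
        _ ≤ Ordinal.omega0 ^ hh κ A * E2 :=
            mul_le_mul_right (by rwa [← Order.add_one_le_iff] at hQlt) _
    have hfib : MB κ A ∧ tauA κ hκ A = tauA κ hκ A := ⟨hm, rfl⟩
    set x := J κ hκ (tauA κ hκ A) ⟨A, hfib⟩ with hx
    set ρ := (pairE κ hκ).symm (⟨1, hK1 κ hκ⟩, x) with hρ
    refine ⟨κ.ord * tauA κ hκ A + ρ.1, ?_, ?_⟩
    · have h1 : κ.ord * tauA κ hκ A + ρ.1 < κ.ord * (tauA κ hκ A + 1) := by
        rw [mul_add, mul_one]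
        exact add_lt_add_right ρ.2 _
      have h2 : tauA κ hκ A + 1 ≤ e := by
        rw [Ordinal.add_one_eq_succ, Order.succ_le_iff]
        exact htau_lt
      exact h1.trans_le (mul_le_mul_right h2 _)
    · obtain ⟨hdiv, hmod⟩ := div_mod_of κ hκ (tauA κ hκ A) ρ.1 ρ.2
      rw [phi]
      have hsub : (⟨(κ.ord * tauA κ hκ A + ρ.1) % κ.ord,
          mod_self_lt κ hκ (κ.ord * tauA κ hκ A + ρ.1)⟩ : Set.Iio κ.ord) = ρ := Subtype.ext hmod
      rw [hsub, hdiv]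
      have hp : pairE κ hκ ρ = (⟨1, hK1 κ hκ⟩, x) := by
        rw [hρ]
        exact Equiv.apply_symm_apply _ _
      rw [hp]
      have h10 : ((⟨1, hK1 κ hκ⟩ : Set.Iio κ.ord), x).1.1 ≠ 0 := one_ne_zero
      rw [if_neg h10, if_pos rfl]
      have hex : ∃ B : Fib κ hκ (tauA κ hκ A),
          J κ hκ (tauA κ hκ A) B = ((⟨1, hK1 κ hκ⟩ : Set.Iio κ.ord), x).2 :=
        ⟨⟨A, hfib⟩, rfl⟩
      rw [dif_pos hex]
      have hJeq : J κ hκ (tauA κ hκ A) hex.choose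
          = J κ hκ (tauA κ hκ A) ⟨A, hfib⟩ := hex.choose_spec
      have heq : hex.choose = (⟨A, hfib⟩ : Fib κ hκ (tauA κ hκ A)) :=
        (J κ hκ (tauA κ hκ A)).injective hJeq
      exact congrArg Subtype.val heq

end MainLemma

end CanonKF


/-- For every infinite cardinal `κ` there is a canonical `κ`-function
`φ : Ord → [Ord × κ]^{<ω}`: (1) `φ α ⊆ α × κ` for every `α`, and (2) for
every nonzero ordinal `δ` of the form `δ = κ·ε` there is `γ < δ` such that
every finite subset of `[γ, δ) × κ` appears as a value `φ β` for some `β < δ`. -/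
theorem exists_canonical_kappa_function (κ : Cardinal.{0}) (hκ : ℵ₀ ≤ κ) :
    ∃ φ : Ordinal.{0} → Finset (Ordinal.{0} × Ordinal.{0}),
      (∀ α : Ordinal, ∀ a ∈ φ α, a.1 < α ∧ a.2 < κ.ord) ∧
      (∀ ε δ : Ordinal, δ = κ.ord * ε → δ ≠ 0 →
        ∃ γ < δ, ∀ A : Finset (Ordinal × Ordinal),
          (∀ a ∈ A, γ ≤ a.1 ∧ a.1 < δ ∧ a.2 < κ.ord) →
          ∃ β < δ, φ β = A) := by
  refine ⟨CanonKF.phi κ hκ, CanonKF.phi_cond1 κ hκ, ?_⟩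
  intro ε δ hδ hδ0
  subst hδ
  have hε : ε ≠ 0 := by
    rintro rfl
    simp at hδ0
  exact CanonKF.main2 κ hκ ε hε
end
end

section
/- Every topological space X has a dense subspace which is left-separated in order type d(X), i.e. there is an enumeration {p_α : α < d(X)} of a dense subset P such that for every δ < d(X), the closure of {p_α : α < δ} is disjoint from {p_α : δ ≤ α < d(X)}. -/
open Cardinal Set

/-- The density of a topological space: the least cardinality of a dense subset. -/
noncomputable def density (X : Type*) [TopologicalSpace X] : Cardinal :=
  sInf {c : Cardinal | ∃ s : Set X, Dense s ∧ #s = c}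

section Aux

universe u

variable {X : Type u} [TopologicalSpace X] {ι : Type u} [LinearOrder ι]
  [WellFoundedLT ι] [Nonempty ι]

open Classical in
/-- Pick the least index `β` with `d β` outside the closure of `t` (junk otherwise). -/
noncomputable def lsPick (d : ι → X) (t : Set X) : ι :=
  if h : {β : ι | d β ∉ closure t}.Nonempty then
    (IsWellFounded.wf (r := ((· < ·) : ι → ι → Prop))).min _ h
  else Classical.arbitrary ι

theorem lsPick_mem {d : ι → X} {t : Set X} (h : {β : ι | d β ∉ closure t}.Nonempty) :
    d (lsPick d t) ∉ closure t := by
  rw [lsPick, dif_pos h]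
  exact (IsWellFounded.wf).min_mem _ h

theorem lsPick_le {d : ι → X} {t : Set X} {β : ι} (hβ : d β ∉ closure t) :
    lsPick d t ≤ β := by
  have h : {β : ι | d β ∉ closure t}.Nonempty := ⟨β, hβ⟩
  rw [lsPick, dif_pos h]
  exact le_of_not_gt ((IsWellFounded.wf).not_lt_min _ hβ)

/-- The transfinite recursion choosing at each ordinal stage the least unused index. -/
noncomputable def lsG (d : ι → X) : Ordinal.{u} → ι :=
  Ordinal.lt_wf.fix (C := fun _ => ι)
    (fun o prev => lsPick d {x | ∃ o', ∃ h : o' < o, d (prev o' h) = x})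

theorem lsG_eq (d : ι → X) (o : Ordinal.{u}) :
    lsG d o = lsPick d ((fun o' => d (lsG d o')) '' Set.Iio o) := by
  show Ordinal.lt_wf.fix _ o = _
  rw [WellFounded.fix_eq]
  congr 1
  ext x
  constructor
  · rintro ⟨o', h, rfl⟩
    exact ⟨o', h, rfl⟩
  · rintro ⟨o', h, rfl⟩
    exact ⟨o', h, rfl⟩

end Aux

/-- Every topological space has a dense subspace left-separated in order
type `d(X)`: an enumeration `⟨p_α : α < d(X)⟩` of a dense set such that
the closure of every initial segment is disjoint from the rest. -/
theorem exists_dense_left_separated (X : Type u) [TopologicalSpace X] :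
    ∃ p : Set.Iio (density X).ord → X,
      Dense (Set.range p) ∧
      ∀ δ : Ordinal, δ < (density X).ord →
        closure (p '' {a | (a : Ordinal) < δ}) ∩ (p '' {a | δ ≤ (a : Ordinal)}) = ∅ := by
  classical
  set κ := density X with hκ
  have hsetne : {c : Cardinal | ∃ s : Set X, Dense s ∧ #s = c}.Nonempty :=
    ⟨#(univ : Set X), univ, dense_univ, rfl⟩
  obtain ⟨s, hsd, hsc⟩ : ∃ s : Set X, Dense s ∧ #s = κ := csInf_mem hsetne
  have hmin : ∀ t : Set X, Dense t → κ ≤ #t := fun t ht => csInf_le' ⟨t, ht, rfl⟩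
  by_cases hκ0 : κ = 0
  · -- `X` is empty
    have hse : s = ∅ := by
      have : IsEmpty s := Cardinal.mk_eq_zero_iff.mp (by rw [hsc, hκ0])
      exact Set.eq_empty_iff_forall_notMem.mpr fun x hx => this.false ⟨x, hx⟩
    have hX : IsEmpty X := by
      refine ⟨fun x => ?_⟩
      have := hsd x
      rw [hse, closure_empty] at this
      exact this
    have hord : κ.ord = 0 := by rw [hκ0, Cardinal.ord_zero]
    refine ⟨fun a => absurd (hord ▸ a.2) ((not_lt_zero (a := a.1))), ?_, ?_⟩
    · intro x; exact isEmptyElim x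
    · intro δ hδ
      rw [hord] at hδ
      exact absurd hδ ((not_lt_zero (a := _)))
  · haveI hwo : IsWellOrder κ.ord.ToType (· < ·) := isWellOrder_lt
    haveI : Nonempty κ.ord.ToType :=
      Ordinal.nonempty_toType_iff.mpr (fun h => hκ0 (by
        rwa [Cardinal.ord_eq_zero] at h))
    -- enumerate a dense set of cardinality κ
    obtain ⟨E⟩ : Nonempty (κ.ord.ToType ≃ s) :=
      Cardinal.eq.mp (by rw [Cardinal.mk_ord_toType, hsc])
    set d : κ.ord.ToType → X := fun i => (E i : X) with hd
    have hranged : Set.range d = s := by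
      ext x
      constructor
      · rintro ⟨i, rfl⟩; exact (E i).2
      · intro hx; exact ⟨E.symm ⟨x, hx⟩, by simp [hd]⟩
    set P : Ordinal → Set X := fun o => (fun o' => d (lsG d o')) '' Set.Iio o with hP
    have hPmono : ∀ {o₁ o₂ : Ordinal}, o₁ ≤ o₂ → P o₁ ⊆ P o₂ :=
      fun h => Set.image_mono (Set.Iio_subset_Iio h)
    -- cardinality bound for initial segments
    have hcard : ∀ o : Ordinal, o < κ.ord → #(P o) < κ := by
      intro o ho
      have heq : P o = Set.range
          (fun i : o.ToType => d (lsG d ((Ordinal.ToType.mk (o := o)).symm i).1)) := by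
        ext x
        constructor
        · rintro ⟨o', ho', rfl⟩
          exact ⟨Ordinal.ToType.mk (o := o) ⟨o', ho'⟩, by simp⟩
        · rintro ⟨i, rfl⟩
          exact ⟨((Ordinal.ToType.mk (o := o)).symm i).1,
            ((Ordinal.ToType.mk (o := o)).symm i).2, rfl⟩
      rw [heq]
      calc #(Set.range _) ≤ #o.ToType := Cardinal.mk_range_le
        _ = o.card := Cardinal.mk_toType o
        _ < κ := Cardinal.lt_ord.mp ho
    -- at each stage there is a point outside the closure of the previous ones
    have hne : ∀ o : Ordinal, o < κ.ord → {β | d β ∉ closure (P o)}.Nonempty := by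
      intro o ho
      have hnd : ¬ Dense (P o) := fun h => absurd (hmin _ h) (not_le.mpr (hcard o ho))
      have : closure (P o) ≠ Set.univ := by
        intro h
        exact hnd (dense_iff_closure_eq.mpr h)
      obtain ⟨x, hx⟩ := (Set.ne_univ_iff_exists_notMem _).mp this
      obtain ⟨y, hys, hyU⟩ :=
        hsd.exists_mem_open isClosed_closure.isOpen_compl ⟨x, hx⟩
      rw [← hranged] at hys
      obtain ⟨β, rfl⟩ := hys
      exact ⟨β, hyU⟩
    have hmem : ∀ o : Ordinal, o < κ.ord → d (lsG d o) ∉ closure (P o) := by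
      intro o ho
      rw [lsG_eq]
      exact lsPick_mem (hne o ho)
    have hleβ : ∀ o : Ordinal, ∀ β, d β ∉ closure (P o) → lsG d o ≤ β := by
      intro o β hβ
      rw [lsG_eq]
      exact lsPick_le hβ
    set p : Set.Iio κ.ord → X := fun a => d (lsG d a.1) with hp
    have hrangep : Set.range p = P κ.ord := by
      ext x
      constructor
      · rintro ⟨a, rfl⟩; exact ⟨a.1, a.2, rfl⟩
      · rintro ⟨o, ho, rfl⟩; exact ⟨⟨o, ho⟩, rfl⟩
    -- strict monotonicity of the chosen indices
    have hlt : ∀ o' o : Ordinal, o' < o → o < κ.ord → lsG d o' < lsG d o := by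
      intro o' o h ho
      have ho' : o' < κ.ord := h.trans ho
      have h1 : d (lsG d o') ∈ P o := ⟨o', h, rfl⟩
      have h2 : d (lsG d o) ∉ closure (P o') :=
        fun hc => hmem o ho (closure_mono (hPmono h.le) hc)
      have hle : lsG d o' ≤ lsG d o := hleβ o' _ h2
      have hne' : lsG d o' ≠ lsG d o := by
        intro hEq
        exact hmem o ho (by rw [← hEq]; exact subset_closure h1)
      exact hle.lt_of_ne hne'
    have htypein : ∀ o : Ordinal, o < κ.ord →
        o ≤ Ordinal.typein ((· < ·) : κ.ord.ToType → κ.ord.ToType → Prop) (lsG d o) := by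
      intro o
      induction o using Ordinal.induction with
      | h o IH =>
        intro ho
        by_contra hcon
        push_neg at hcon
        set t := Ordinal.typein ((· < ·) : κ.ord.ToType → κ.ord.ToType → Prop) (lsG d o)
          with ht
        have ht1 : t ≤ Ordinal.typein ((· < ·) : κ.ord.ToType → κ.ord.ToType → Prop)
            (lsG d t) := IH t hcon (hcon.trans ho)
        have ht2 : lsG d t < lsG d o := hlt t o hcon ho
        have h3 := (Ordinal.typein_lt_typein
          ((· < ·) : κ.ord.ToType → κ.ord.ToType → Prop)).mpr ht2
        rw [← ht] at h3
        exact lt_irrefl _ (lt_of_le_of_lt ht1 h3)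
    -- density
    have hdense : Dense (Set.range p) := by
      rw [← dense_closure]
      refine hsd.mono ?_
      intro x hx
      rw [← hranged] at hx
      obtain ⟨β, rfl⟩ := hx
      by_contra hc
      have hall : ∀ o : Ordinal, o < κ.ord → lsG d o < β := by
        intro o ho
        have h1 : d β ∉ closure (P o) := by
          intro hmem'
          exact hc (closure_mono (by rw [hrangep]; exact hPmono ho.le) hmem')
        have hle : lsG d o ≤ β := hleβ o β h1
        have hne' : lsG d o ≠ β := by
          intro hEq
          apply hc
          apply subset_closure
          rw [hrangep, ← hEq]
          exact ⟨o, ho, rfl⟩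
        exact hle.lt_of_ne hne'
      have hβlt := Ordinal.typein_lt_self β
      have h1 := htypein _ hβlt
      have h2 := (Ordinal.typein_lt_typein
        ((· < ·) : κ.ord.ToType → κ.ord.ToType → Prop)).mpr (hall _ hβlt)
      exact lt_irrefl _ (lt_of_le_of_lt h1 h2)
    refine ⟨p, hdense, ?_⟩
    intro δ hδ
    rw [Set.eq_empty_iff_forall_notMem]
    rintro x ⟨hx1, hx2⟩
    obtain ⟨a, ha, rfl⟩ := hx2
    have hsub : p '' {b : Set.Iio κ.ord | (b : Ordinal) < δ} ⊆ P a.1 := by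
      rintro y ⟨b, hb, rfl⟩
      exact ⟨b.1, Set.mem_Iio.mpr (lt_of_lt_of_le hb ha), rfl⟩
    exact hmem a.1 a.2 (closure_mono hsub hx1)
end

section
/- Let X be a topological space and κ an infinite cardinal. Then X has no free sequence of length κ⁺ if and only if: for every Y ⊆ X and every family 𝒰 of open sets such that for every A ⊆ Y with |A| ≤ κ there is U ∈ 𝒰 with cl(A) ⊆ U, there exists a subfamily 𝒱 ⊆ 𝒰 with |𝒱| ≤ κ covering Y. -/
open Cardinal Set

universe u

section Aux
open scoped Classical

lemma card_image_Iio' {X : Type u} (p : Ordinal.{u} → X) (o : Ordinal.{u}) :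
    #(p '' Set.Iio o) ≤ o.card := by
  have h := Cardinal.mk_image_le_lift (f := p) (s := Set.Iio o)
  rw [Ordinal.mk_Iio_ordinal, Cardinal.lift_lift] at h
  exact Cardinal.lift_le.mp h

variable {X : Type u} [TopologicalSpace X]

/-- the recursion step -/
noncomputable def seqF (Y : Set X) (𝒰 : Set (Set X)) (y₀ : X) :
    ∀ α : Ordinal.{u}, (∀ β, β < α → X × Set X) → X × Set X := fun α g =>
  let A : Set X := {x | ∃ β, ∃ h : β < α, (g β h).1 = x}
  let U : Set X := if h : ∃ U ∈ 𝒰, closure A ⊆ U then h.choose else ∅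
  let W : Set (Set X) := insert U {u | ∃ β, ∃ h : β < α, (g β h).2 = u}
  (if h : ∃ y ∈ Y, y ∉ ⋃₀ W then h.choose else y₀, U)

noncomputable def seq (Y : Set X) (𝒰 : Set (Set X)) (y₀ : X) (α : Ordinal.{u}) : X × Set X :=
  Ordinal.lt_wf.fix (seqF Y 𝒰 y₀) α

lemma seq_eq (Y : Set X) (𝒰 : Set (Set X)) (y₀ : X) (α : Ordinal.{u}) :
    seq Y 𝒰 y₀ α = seqF Y 𝒰 y₀ α (fun β _ => seq Y 𝒰 y₀ β) :=
  Ordinal.lt_wf.fix_eq (seqF Y 𝒰 y₀) α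

lemma seq_unfold (Y : Set X) (𝒰 : Set (Set X)) (y₀ : X) (α : Ordinal.{u}) :
    seq Y 𝒰 y₀ α =
      ((if h : ∃ y ∈ Y, y ∉ ⋃₀ (insert
          (if h : ∃ U ∈ 𝒰, closure ((fun β => (seq Y 𝒰 y₀ β).1) '' Set.Iio α) ⊆ U
            then h.choose else ∅)
          ((fun β => (seq Y 𝒰 y₀ β).2) '' Set.Iio α)) then h.choose else y₀),
        (if h : ∃ U ∈ 𝒰, closure ((fun β => (seq Y 𝒰 y₀ β).1) '' Set.Iio α) ⊆ U
            then h.choose else ∅)) := by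
  have hA : {x | ∃ β, ∃ _ : β < α, (seq Y 𝒰 y₀ β).1 = x}
      = (fun β => (seq Y 𝒰 y₀ β).1) '' Set.Iio α := by
    ext x; simp [Set.mem_image, exists_prop]
  have hW : {u | ∃ β, ∃ _ : β < α, (seq Y 𝒰 y₀ β).2 = u}
      = (fun β => (seq Y 𝒰 y₀ β).2) '' Set.Iio α := by
    ext u; simp [Set.mem_image, exists_prop]
  rw [seq_eq]
  simp only [seqF, hA, hW]

end Aux

/-- `p` enumerates a free sequence of length `μ`: for every `δ < μ` the
closure of the initial segment is disjoint from the closure of the rest. -/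
def IsFreeSeq {X : Type u} [TopologicalSpace X] (μ : Ordinal.{u}) (p : Ordinal.{u} → X) : Prop :=
  ∀ δ < μ, closure (p '' Set.Iio δ) ∩ closure (p '' Set.Ico δ μ) = ∅

/-- Characterization of spaces with no free sequences of length `κ⁺`:
`X` has no free sequence of length `κ⁺` iff for every `Y ⊆ X` and every
family `𝒰` of open sets such that the closure of every subset of `Y` of
size `≤ κ` is contained in some member of `𝒰`, some subfamily of `𝒰` of
size `≤ κ` covers `Y`. -/
theorem no_free_seq_iff_reflection (X : Type u) [TopologicalSpace X]
    (κ : Cardinal.{u}) (hκ : ℵ₀ ≤ κ) :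
    (¬ ∃ p : Ordinal.{u} → X, IsFreeSeq ((Order.succ κ).ord) p) ↔
    (∀ (Y : Set X) (𝒰 : Set (Set X)), (∀ U ∈ 𝒰, IsOpen U) →
      (∀ A : Set X, A ⊆ Y → #A ≤ κ → ∃ U ∈ 𝒰, closure A ⊆ U) →
      ∃ 𝒱 ⊆ 𝒰, #𝒱 ≤ κ ∧ Y ⊆ ⋃₀ 𝒱) := by
  set μ := (Order.succ κ).ord with hμdef
  have hcard : ∀ {α : Ordinal.{u}}, α < μ → α.card ≤ κ := by
    intro α h
    rw [hμdef, Cardinal.lt_ord] at h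
    exact Order.lt_succ_iff.mp h
  have hcof : μ.cof = Order.succ κ := (Cardinal.isRegular_succ hκ).cof_eq
  constructor
  · -- forward: no free sequence → reflection
    intro hno Y 𝒰 hopen hcl
    classical
    by_contra hcon
    have hnc : ∀ 𝒱 ⊆ 𝒰, #𝒱 ≤ κ → ∃ y ∈ Y, y ∉ ⋃₀ 𝒱 := by
      intro 𝒱 h1 h2
      by_contra h
      push_neg at h
      exact hcon ⟨𝒱, h1, h2, h⟩
    have hYne : Y.Nonempty := by
      obtain ⟨y, hy, -⟩ := hnc ∅ (empty_subset _) (by simp)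
      exact ⟨y, hy⟩
    set p : Ordinal.{u} → X := fun α => (seq Y 𝒰 hYne.choose α).1 with hp
    set Uf : Ordinal.{u} → Set X := fun α => (seq Y 𝒰 hYne.choose α).2 with hU
    -- the key invariant
    have key : ∀ α : Ordinal.{u}, α < μ →
        (Uf α ∈ 𝒰 ∧ closure (p '' Set.Iio α) ⊆ Uf α) ∧
        (p α ∈ Y ∧ ∀ β ≤ α, p α ∉ Uf β) := by
      intro α
      induction α using Ordinal.induction with
      | h α IH =>
        intro hα
        have hsub : p '' Set.Iio α ⊆ Y := by
          rintro x ⟨β, hβ, rfl⟩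
          exact ((IH β hβ (hβ.trans hα)).2).1
        have hcardA : #(p '' Set.Iio α) ≤ κ :=
          (card_image_Iio' p α).trans (hcard hα)
        have hex : ∃ U ∈ 𝒰, closure (p '' Set.Iio α) ⊆ U := hcl _ hsub hcardA
        have hUα : Uf α = hex.choose := by
          rw [hU]
          simp only [seq_unfold Y 𝒰 hYne.choose α]
          rw [dif_pos hex]
        have hU1 : Uf α ∈ 𝒰 := by rw [hUα]; exact hex.choose_spec.1
        have hU2 : closure (p '' Set.Iio α) ⊆ Uf α := by
          rw [hUα]; exact hex.choose_spec.2
        -- the family used at stage α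
        set W : Set (Set X) := insert (Uf α) (Uf '' Set.Iio α) with hW
        have hWsub : W ⊆ 𝒰 := by
          rw [hW]
          rintro u hu
          rcases hu with rfl | ⟨β, hβ, rfl⟩
          · exact hU1
          · exact (IH β hβ (hβ.trans hα)).1.1
        have hWcard : #W ≤ κ := by
          rw [hW]
          refine le_trans (Cardinal.mk_insert_le) ?_
          have : #(Uf '' Set.Iio α) ≤ κ := (card_image_Iio' Uf α).trans (hcard hα)
          calc #(Uf '' Set.Iio α) + 1 ≤ κ + 1 := by
                exact add_le_add_left this 1
            _ = κ := by
                rw [Cardinal.add_one_eq hκ]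
        have hexy : ∃ y ∈ Y, y ∉ ⋃₀ W := hnc W hWsub hWcard
        have hpα : p α = hexy.choose := by
          rw [hp]
          simp only [seq_unfold Y 𝒰 hYne.choose α]
          have : (insert
              (if h : ∃ U ∈ 𝒰, closure ((fun β => (seq Y 𝒰 hYne.choose β).1) '' Set.Iio α) ⊆ U
                then h.choose else ∅)
              ((fun β => (seq Y 𝒰 hYne.choose β).2) '' Set.Iio α)) = W := by
            rw [hW, dif_pos hex, hUα]
          rw [this, dif_pos hexy]
        have hy1 : p α ∈ Y := by rw [hpα]; exact hexy.choose_spec.1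
        have hy2 : p α ∉ ⋃₀ W := by rw [hpα]; exact hexy.choose_spec.2
        refine ⟨⟨hU1, hU2⟩, hy1, ?_⟩
        intro β hβ hmem
        apply hy2
        rcases eq_or_lt_of_le hβ with rfl | hlt
        · exact ⟨Uf β, by rw [hW]; exact mem_insert _ _, hmem⟩
        · exact ⟨Uf β, by rw [hW]; exact mem_insert_of_mem _ ⟨β, hlt, rfl⟩, hmem⟩
    -- p is a free sequence of length μ
    apply hno
    refine ⟨p, fun δ hδ => ?_⟩
    have h1 : closure (p '' Set.Iio δ) ⊆ Uf δ := (key δ hδ).1.2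
    have h2 : closure (p '' Set.Ico δ μ) ⊆ (Uf δ)ᶜ := by
      apply closure_minimal
      · rintro x ⟨α, ⟨hδα, hαμ⟩, rfl⟩
        exact ((key α hαμ).2).2 δ hδα
      · exact (hopen _ ((key δ hδ).1.1)).isClosed_compl
    rw [Set.eq_empty_iff_forall_notMem]
    rintro x ⟨hx1, hx2⟩
    exact (h2 hx2) (h1 hx1)
  · -- backward: reflection → no free sequence
    intro href ⟨p, hfree⟩
    set Y : Set X := p '' Set.Iio μ with hY
    set 𝒰 : Set (Set X) := (fun δ => (closure (p '' Set.Ico δ μ))ᶜ) '' Set.Iio μ with h𝒰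
    have hopen : ∀ U ∈ 𝒰, IsOpen U := by
      rintro U ⟨δ, hδ, rfl⟩
      exact isClosed_closure.isOpen_compl
    have hcl : ∀ A : Set X, A ⊆ Y → #A ≤ κ → ∃ U ∈ 𝒰, closure A ⊆ U := by
      intro A hAY hAcard
      -- choose indices
      have hchoice : ∀ a : A, ∃ α : Ordinal.{u}, α < μ ∧ p α = a := by
        rintro ⟨a, ha⟩
        obtain ⟨α, hα, rfl⟩ := hAY ha
        exact ⟨α, hα, rfl⟩
      choose f hf1 hf2 using hchoice
      have hbdd : (⨆ a : A, f a) < μ := by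
        apply Ordinal.iSup_lt_ord _ hf1
        rw [hcof]
        exact hAcard.trans_lt (Order.lt_succ κ)
      set δ : Ordinal.{u} := (⨆ a : A, f a) + 1 with hδdef
      have hδμ : δ < μ := by
        have : Order.IsSuccLimit μ := Cardinal.isSuccLimit_ord (hκ.trans (Order.le_succ κ))
        exact this.succ_lt hbdd
      refine ⟨(closure (p '' Set.Ico δ μ))ᶜ, ⟨δ, hδμ, rfl⟩, ?_⟩
      have hAsub : A ⊆ p '' Set.Iio δ := by
        intro a ha
        refine ⟨f ⟨a, ha⟩, ?_, hf2 ⟨a, ha⟩⟩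
        have : f ⟨a, ha⟩ ≤ ⨆ a : A, f a :=
          le_ciSup (Ordinal.bddAbove_range _) (⟨a, ha⟩ : A)
        exact lt_of_le_of_lt this (lt_add_one _)
      have hdisj := hfree δ hδμ
      intro x hx
      have hx1 : x ∈ closure (p '' Set.Iio δ) :=
        closure_mono hAsub hx
      intro hx2
      rw [Set.eq_empty_iff_forall_notMem] at hdisj
      exact hdisj x ⟨hx1, hx2⟩
    obtain ⟨𝒱, h𝒱𝒰, h𝒱card, h𝒱cov⟩ := href Y 𝒰 hopen hcl
    -- choose δ for each V ∈ 𝒱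
    have hchoice : ∀ V : 𝒱, ∃ δ : Ordinal.{u}, δ < μ ∧ (closure (p '' Set.Ico δ μ))ᶜ = V := by
      rintro ⟨V, hV⟩
      obtain ⟨δ, hδ, rfl⟩ := h𝒱𝒰 hV
      exact ⟨δ, hδ, rfl⟩
    choose f hf1 hf2 using hchoice
    have hbdd : (⨆ V : 𝒱, f V) < μ := by
      apply Ordinal.iSup_lt_ord _ hf1
      rw [hcof]
      exact h𝒱card.trans_lt (Order.lt_succ κ)
    set σ : Ordinal.{u} := ⨆ V : 𝒱, f V with hσdef
    have hpσ : p σ ∈ Y := ⟨σ, hbdd, rfl⟩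
    obtain ⟨V, hV, hpV⟩ := h𝒱cov hpσ
    have hment : p σ ∈ closure (p '' Set.Ico (f ⟨V, hV⟩) μ) := by
      apply subset_closure
      refine ⟨σ, ⟨?_, hbdd⟩, rfl⟩
      exact le_ciSup (Ordinal.bddAbove_range _) (⟨V, hV⟩ : 𝒱)
    have : p σ ∈ (closure (p '' Set.Ico (f ⟨V, hV⟩) μ))ᶜ := by
      rw [hf2 ⟨V, hV⟩]; exact hpV
    exact this hment
end

section
/- Let X be a regular topological space and κ an infinite cardinal. If X is initially κ-compact and has no free sequence of length κ⁺, then the tightness of X is at most κ. -/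
open Cardinal Set

/-- `X` is initially `κ`-compact: every open cover of size at most `κ`
has a finite subcover. -/
def InitiallyCompact (X : Type u) [TopologicalSpace X] (κ : Cardinal.{u}) : Prop :=
  ∀ 𝒰 : Set (Set X), (∀ U ∈ 𝒰, IsOpen U) → #𝒰 ≤ κ → ⋃₀ 𝒰 = Set.univ →
    ∃ 𝒱 ⊆ 𝒰, 𝒱.Finite ∧ ⋃₀ 𝒱 = Set.univ

namespace FreeSeqAux

universe u
variable {X : Type u} [TopologicalSpace X]

omit [TopologicalSpace X] in
lemma mk_image_Iio_le (f : Ordinal.{u} → X) (α : Ordinal.{u}) : #(f '' Set.Iio α) ≤ α.card := by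
  have : f '' Set.Iio α = Set.range (fun i : α.ToType => f (((Ordinal.ToType.mk (o := α))).symm i)) := by
    ext y; constructor
    · rintro ⟨β, hβ, rfl⟩; exact ⟨(Ordinal.ToType.mk (o := α)) ⟨β, hβ⟩, by simp⟩
    · rintro ⟨i, rfl⟩; exact ⟨_, (((Ordinal.ToType.mk (o := α))).symm i).2, rfl⟩
  rw [this, ← Cardinal.mk_toType]
  exact mk_range_le

/-- Finite-intersection-property version of initial `κ`-compactness. -/
lemma fip {κ : Cardinal.{u}} (hcomp : InitiallyCompact X κ) {ι : Type u}
    (F : ι → Set X) (hcard : #ι ≤ κ) (hclosed : ∀ i, IsClosed (F i))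
    (hfip : ∀ s : Finset ι, (⋂ i ∈ s, F i).Nonempty) : (⋂ i, F i).Nonempty := by
  obtain ⟨x0, -⟩ := hfip ∅
  rcases isEmpty_or_nonempty ι with hι | hι
  · exact ⟨x0, by simp⟩
  by_contra hcon
  rw [Set.not_nonempty_iff_eq_empty] at hcon
  inhabit ι
  set 𝒰 : Set (Set X) := Set.range (fun i => (F i)ᶜ) with h𝒰
  have hcov : ⋃₀ 𝒰 = Set.univ := by
    ext y; simp only [Set.mem_sUnion, Set.mem_univ, iff_true]
    have : y ∉ ⋂ i, F i := by rw [hcon]; exact Set.notMem_empty y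
    rw [Set.mem_iInter] at this; push_neg at this
    obtain ⟨i, hi⟩ := this
    exact ⟨(F i)ᶜ, ⟨i, rfl⟩, hi⟩
  obtain ⟨𝒱, h𝒱𝒰, h𝒱fin, h𝒱cov⟩ := hcomp 𝒰
    (by rintro V ⟨i, rfl⟩; exact (hclosed i).isOpen_compl) (mk_range_le.trans hcard) hcov
  classical
  set f : Set X → ι := fun V => if h : ∃ i, (F i)ᶜ = V then h.choose else default with hf
  have hfV : ∀ V ∈ 𝒱, (F (f V))ᶜ = V := by
    intro V hV
    obtain ⟨i, hi⟩ := h𝒱𝒰 hV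
    rw [hf]; simp only
    rw [dif_pos ⟨i, hi⟩]
    exact Exists.choose_spec (⟨i, hi⟩ : ∃ i, (F i)ᶜ = V)
  obtain ⟨y, hy⟩ := hfip ((h𝒱fin.image f).toFinset)
  have : y ∈ ⋃₀ 𝒱 := h𝒱cov ▸ Set.mem_univ y
  obtain ⟨V, hV, hyV⟩ := this
  have h1 : y ∈ F (f V) := by
    refine Set.mem_iInter₂.mp hy (f V) ?_
    rw [Set.Finite.mem_toFinset]
    exact ⟨V, hV, rfl⟩
  rw [← hfV V hV] at hyV
  exact hyV h1

/-- Key point-picking lemma: there is a point of the `κ`-closed set `A'` avoiding a given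
closed set missing `x` and lying in the closures of `≤ κ` many given open nbhds of `x`. -/
lemma key {κ : Cardinal.{u}} [T3Space X] (hκ : ℵ₀ ≤ κ) (hcomp : InitiallyCompact X κ)
    {A' : Set X} {x : X}
    (hxc : x ∈ closure A')
    (hcl : ∀ B : Set X, B ⊆ A' → #B ≤ κ → closure B ⊆ A')
    (α : Ordinal.{u}) (hα : α.card ≤ κ)
    (U : Ordinal.{u} → Set X) (hU : ∀ β < α, IsOpen (U β) ∧ x ∈ U β)
    (I : Set X) (hI : IsClosed I) (hxI : x ∉ I) :
    ∃ y, y ∈ A' ∧ y ∉ I ∧ ∀ β < α, y ∈ closure (U β) := by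
  classical
  obtain ⟨t, ht, htc, hts⟩ :=
    exists_mem_nhds_isClosed_subset (hI.isOpen_compl.mem_nhds hxI)
  set O : Set X := interior t with hO
  have hOo : IsOpen O := isOpen_interior
  have hxO : x ∈ O := mem_interior_iff_mem_nhds.2 ht
  have hclO : closure O ⊆ Iᶜ := (closure_minimal interior_subset htc).trans hts
  set T := α.ToType with hT
  set e : T → Ordinal.{u} := fun i => (((Ordinal.ToType.mk (o := α))).symm i : Ordinal) with he
  have helt : ∀ i, e i < α := fun i => (((Ordinal.ToType.mk (o := α))).symm i).2
  have hex : ∀ s : Finset T, ∃ y, y ∈ A' ∧ y ∈ O ∧ ∀ i ∈ s, y ∈ U (e i) := by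
    intro s
    have hopen : IsOpen (O ∩ ⋂ i ∈ s, U (e i)) :=
      hOo.inter (isOpen_biInter_finset fun i _ => (hU _ (helt i)).1)
    have hxmem : x ∈ O ∩ ⋂ i ∈ s, U (e i) :=
      ⟨hxO, Set.mem_iInter₂.mpr fun i _ => (hU _ (helt i)).2⟩
    obtain ⟨y, hy1, hy2⟩ := (mem_closure_iff.mp hxc) _ hopen hxmem
    exact ⟨y, hy2, hy1.1, fun i hi => Set.mem_iInter₂.mp hy1.2 i hi⟩
  choose a ha1 ha2 ha3 using hex
  set F : Finset T → Set X := fun tt => closure (a '' {s | tt ⊆ s}) with hF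
  have hcardT : #(Finset T) ≤ κ := by
    rcases finite_or_infinite T with hf | hi
    · exact (Cardinal.mk_le_aleph0).trans hκ
    · rw [mk_finset_of_infinite]
      rw [hT, Cardinal.mk_toType]
      exact hα
  have hFIP : ∀ s : Finset (Finset T), (⋂ tt ∈ s, F tt).Nonempty := by
    intro s
    refine ⟨a (s.sup id), Set.mem_iInter₂.mpr fun tt htt => ?_⟩
    exact subset_closure ⟨s.sup id, Finset.le_sup (f := id) htt, rfl⟩
  obtain ⟨y, hy⟩ := fip hcomp F hcardT (fun tt => isClosed_closure) hFIP
  have hy' : ∀ tt, y ∈ F tt := Set.mem_iInter.mp hy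
  have hyr : y ∈ closure (Set.range a) := by
    have h0 := hy' ∅
    rw [hF] at h0
    refine closure_mono ?_ h0
    rintro _ ⟨s, -, rfl⟩; exact ⟨s, rfl⟩
  refine ⟨y, ?_, ?_, ?_⟩
  · exact hcl (Set.range a) (Set.range_subset_iff.mpr ha1) (mk_range_le.trans hcardT) hyr
  · intro hyI
    have : y ∈ closure O := closure_mono (Set.range_subset_iff.mpr ha2) hyr
    exact hclO this hyI
  · intro β hβ
    set i : T := (Ordinal.ToType.mk (o := α)) ⟨β, hβ⟩ with hi
    have hei : e i = β := by rw [he, hi]; simp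
    have h1 := hy' {i}
    rw [hF] at h1
    refine closure_mono ?_ h1
    rintro _ ⟨s, hs, rfl⟩
    rw [← hei]
    exact ha3 s i (hs (Finset.mem_singleton_self i))

open Classical in
/-- pick the next point of the free sequence -/
noncomputable def pickP (A' : Set X) (x : X) (α : Ordinal.{u})
    (IH : ∀ β, β < α → X × Set X) : X :=
  if h : ∃ y, y ∈ A' ∧ y ∉ closure (Set.range (fun β : Set.Iio α => (IH β.1 β.2).1)) ∧
      ∀ β (hb : β < α), y ∈ closure (IH β hb).2 then h.choose else x

open Classical in
/-- pick the next separating open set -/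
noncomputable def pickU (A' : Set X) (x : X) (α : Ordinal.{u})
    (IH : ∀ β, β < α → X × Set X) : Set X :=
  if h : ∃ V : Set X, IsOpen V ∧ x ∈ V ∧ Disjoint (closure V)
      (closure (insert (pickP A' x α IH)
        (Set.range (fun β : Set.Iio α => (IH β.1 β.2).1)))) then h.choose else Set.univ

noncomputable def stage (A' : Set X) (x : X) : Ordinal.{u} → X × Set X :=
  Ordinal.lt_wf.fix (fun α IH => (pickP A' x α IH, pickU A' x α IH))

lemma stage_def (A' : Set X) (x : X) (α : Ordinal.{u}) :
    stage A' x α = (pickP A' x α (fun β _ => stage A' x β),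
      pickU A' x α (fun β _ => stage A' x β)) := by
  rw [stage, WellFounded.fix_eq]

end FreeSeqAux

/-- A regular, initially `κ`-compact space with no free sequence of length
`κ⁺` has tightness at most `κ`. -/
theorem tightness_le_of_initiallyCompact (X : Type u) [TopologicalSpace X] [T3Space X]
    (κ : Cardinal.{u}) (hκ : ℵ₀ ≤ κ)
    (hcomp : InitiallyCompact X κ)
    (hfree : ¬ ∃ p : Ordinal.{u} → X, IsFreeSeq ((Order.succ κ).ord) p) :
    ∀ (A : Set X) (x : X), x ∈ closure A → ∃ B ⊆ A, #B ≤ κ ∧ x ∈ closure B := by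
  classical
  intro A x hx
  by_contra hcon
  push_neg at hcon
  -- hcon : ∀ B ⊆ A, #B ≤ κ → x ∉ closure B
  set A' : Set X := {y | ∃ B, B ⊆ A ∧ #B ≤ κ ∧ y ∈ closure B} with hA'def
  have hA'A : A ⊆ A' := fun a ha =>
    ⟨{a}, Set.singleton_subset_iff.mpr ha,
      by rw [Cardinal.mk_singleton]; exact one_lt_aleph0.le.trans hκ, subset_closure rfl⟩
  have hxc : x ∈ closure A' := closure_mono hA'A hx
  have hxA' : x ∉ A' := fun h => by
    obtain ⟨B, h1, h2, h3⟩ := h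
    exact hcon B h1 h2 h3
  have hcl : ∀ B : Set X, B ⊆ A' → #B ≤ κ → closure B ⊆ A' := by
    intro B hBA' hBκ
    rcases Set.eq_empty_or_nonempty B with rfl | hBne
    · simp
    have := hBne.to_subtype
    have hex : ∀ b : B, ∃ C : Set X, C ⊆ A ∧ #C ≤ κ ∧ (b : X) ∈ closure C :=
      fun b => hBA' b.2
    choose C hC1 hC2 hC3 using hex
    have hDA : (⋃ b : B, C b) ⊆ A := Set.iUnion_subset hC1
    have hDκ : #(⋃ b : B, C b) ≤ κ := by
      refine le_trans (Cardinal.mk_iUnion_le _) ?_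
      refine le_trans (mul_le_mul' hBκ (ciSup_le' hC2)) ?_
      exact le_of_eq (Cardinal.mul_eq_self hκ)
    have hBc : B ⊆ closure (⋃ b : B, C b) := fun b hb =>
      closure_mono (Set.subset_iUnion _ ⟨b, hb⟩) (hC3 ⟨b, hb⟩)
    intro y hy
    have hy2 : y ∈ closure (⋃ b : B, C b) := by
      have := closure_mono hBc hy
      rwa [closure_closure] at this
    exact ⟨_, hDA, hDκ, hy2⟩
  set μ : Ordinal.{u} := (Order.succ κ).ord with hμdef
  have hμcard : ∀ {α : Ordinal.{u}}, α < μ → α.card ≤ κ := fun h =>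
    Order.lt_succ_iff.mp (Cardinal.lt_ord.mp h)
  set P : Ordinal.{u} → X := fun β => (FreeSeqAux.stage A' x β).1 with hPdef'
  set U : Ordinal.{u} → Set X := fun β => (FreeSeqAux.stage A' x β).2 with hUdef'
  have hrange : ∀ α : Ordinal.{u},
      Set.range (fun β : Set.Iio α => (FreeSeqAux.stage A' x β.1).1) = P '' Set.Iio α := by
    intro α; rw [Set.image_eq_range]
  have inv : ∀ α, α < μ →
      (P α ∈ A' ∧ P α ∉ closure (P '' Set.Iio α) ∧ ∀ β < α, P α ∈ closure (U β)) ∧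
      (IsOpen (U α) ∧ x ∈ U α ∧
        Disjoint (closure (U α)) (closure (insert (P α) (P '' Set.Iio α)))) := by
    intro α
    induction α using Ordinal.induction with
    | _ α IH =>
    intro hα
    have hαc : α.card ≤ κ := hμcard hα
    have hsub : P '' Set.Iio α ⊆ A' := by
      rintro _ ⟨β, hβ, rfl⟩; exact (IH β hβ (hβ.trans hα)).1.1
    have hIc : closure (P '' Set.Iio α) ⊆ A' :=
      hcl _ hsub ((FreeSeqAux.mk_image_Iio_le P α).trans hαc)
    have hxI : x ∉ closure (P '' Set.Iio α) := fun h => hxA' (hIc h)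
    have hUprev : ∀ β < α, IsOpen (U β) ∧ x ∈ U β :=
      fun β hβ => ⟨(IH β hβ (hβ.trans hα)).2.1, (IH β hβ (hβ.trans hα)).2.2.1⟩
    have hexP : ∃ y, y ∈ A' ∧
        y ∉ closure (Set.range (fun β : Set.Iio α => (FreeSeqAux.stage A' x β.1).1)) ∧
        ∀ β (_ : β < α), y ∈ closure (FreeSeqAux.stage A' x β).2 := by
      obtain ⟨y, h1, h2, h3⟩ := FreeSeqAux.key hκ hcomp hxc hcl α hαc U hUprev _
        isClosed_closure hxI
      exact ⟨y, h1, by rw [hrange α]; exact h2, h3⟩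
    have hPdef : P α = FreeSeqAux.pickP A' x α (fun β _ => FreeSeqAux.stage A' x β) :=
      congrArg Prod.fst (FreeSeqAux.stage_def A' x α)
    have hPeq : P α = Exists.choose hexP := by
      rw [hPdef, FreeSeqAux.pickP, dif_pos hexP]
    have hPmem := hexP.choose_spec
    rw [← hPeq, hrange α] at hPmem
    obtain ⟨hp1, hp2, hp3⟩ := hPmem
    have hins : insert (P α) (P '' Set.Iio α) ⊆ A' := Set.insert_subset hp1 hsub
    have hinsκ : #(insert (P α) (P '' Set.Iio α) : Set X) ≤ κ := by
      refine le_trans Cardinal.mk_insert_le ?_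
      refine le_trans (add_le_add ((FreeSeqAux.mk_image_Iio_le P α).trans hαc)
        (one_lt_aleph0.le.trans hκ)) ?_
      exact le_of_eq (Cardinal.add_eq_self hκ)
    have hxJ : x ∉ closure (insert (P α) (P '' Set.Iio α)) := fun h =>
      hxA' (hcl _ hins hinsκ h)
    have hexU : ∃ V : Set X, IsOpen V ∧ x ∈ V ∧ Disjoint (closure V)
        (closure (insert (FreeSeqAux.pickP A' x α (fun β _ => FreeSeqAux.stage A' x β))
          (Set.range (fun β : Set.Iio α => (FreeSeqAux.stage A' x β.1).1)))) := by
      obtain ⟨t, ht, htc, hts⟩ := exists_mem_nhds_isClosed_subset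
        (isClosed_closure.isOpen_compl.mem_nhds hxJ)
      refine ⟨interior t, isOpen_interior, mem_interior_iff_mem_nhds.2 ht, ?_⟩
      rw [hrange α, ← hPdef, Set.disjoint_left]
      intro z hz hz2
      exact hts (closure_minimal interior_subset htc hz) hz2
    have hUeq : U α = Exists.choose hexU := by
      have h2 : U α = FreeSeqAux.pickU A' x α (fun β _ => FreeSeqAux.stage A' x β) :=
        congrArg Prod.snd (FreeSeqAux.stage_def A' x α)
      rw [h2, FreeSeqAux.pickU, dif_pos hexU]
    have hUspec := hexU.choose_spec
    rw [← hUeq] at hUspec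
    obtain ⟨hu1, hu2, hu3⟩ := hUspec
    rw [hrange α, ← hPdef] at hu3
    exact ⟨⟨hp1, hp2, hp3⟩, hu1, hu2, hu3⟩
  have hfs : IsFreeSeq μ P := by
    intro δ hδ
    have hIco : P '' Set.Ico δ μ = insert (P δ) (P '' Set.Ioo δ μ) := by
      rw [← Set.image_insert_eq, Set.Ioo_insert_left hδ]
    rw [hIco, Set.insert_eq, closure_union, closure_singleton]
    apply Set.eq_empty_iff_forall_notMem.mpr
    rintro y ⟨hy1, hy2⟩
    rcases hy2 with hy2 | hy2
    · rw [Set.mem_singleton_iff] at hy2; subst hy2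
      exact (inv δ hδ).1.2.1 hy1
    · have hsubU : P '' Set.Ioo δ μ ⊆ closure (U δ) := by
        rintro _ ⟨γ, ⟨h1, h2⟩, rfl⟩; exact (inv γ h2).1.2.2 δ h1
      have hyU : y ∈ closure (U δ) := by
        have := closure_mono hsubU hy2
        rwa [closure_closure] at this
      exact Set.disjoint_left.mp (inv δ hδ).2.2.2 hyU
        (closure_mono (Set.subset_insert _ _) hy1)
  exact hfree ⟨P, hfs⟩
end

section
/- Let X be a topological space and κ an infinite cardinal. If X is (κ,κ⁺]-compact and t(X) ≤ κ, then X has no free sequence of length κ⁺. -/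
open Cardinal Set

/-- `X` is `(κ, κ⁺]`-compact: every open cover of cardinality `κ⁺` has a
subcover of cardinality at most `κ`. -/
def IntervalCompact (X : Type u) [TopologicalSpace X] (κ : Cardinal.{u}) : Prop :=
  ∀ 𝒰 : Set (Set X), (∀ U ∈ 𝒰, IsOpen U) → #𝒰 = Order.succ κ → ⋃₀ 𝒰 = Set.univ →
    ∃ 𝒱 ⊆ 𝒰, #𝒱 ≤ κ ∧ ⋃₀ 𝒱 = Set.univ

/-- A `(κ,κ⁺]`-compact space of tightness at most `κ` has no free sequence
of length `κ⁺`. -/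
theorem no_free_seq_of_intervalCompact (X : Type u) [TopologicalSpace X]
    (κ : Cardinal.{u}) (hκ : ℵ₀ ≤ κ)
    (hcomp : IntervalCompact X κ)
    (ht : ∀ (A : Set X) (x : X), x ∈ closure A → ∃ B ⊆ A, #B ≤ κ ∧ x ∈ closure B) :
    ¬ ∃ p : Ordinal.{u} → X, IsFreeSeq ((Order.succ κ).ord) p := by
  rintro ⟨p, hp⟩
  set μ := (Order.succ κ).ord with hμdef
  have hreg : (Order.succ κ).IsRegular := Cardinal.isRegular_succ hκ
  have hcof : μ.cof = Order.succ κ := hreg.cof_eq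
  have hlim : Order.IsSuccLimit μ := Cardinal.isSuccLimit_ord (hκ.trans (Order.le_succ κ))
  set F : Ordinal.{u} → Set X := fun δ => closure (p '' Set.Ico δ μ) with hF
  have hFanti : ∀ {δ δ' : Ordinal.{u}}, δ ≤ δ' → F δ' ⊆ F δ := fun h =>
    closure_mono (image_mono (Ico_subset_Ico_left h))
  have hmem : ∀ {δ : Ordinal.{u}}, δ < μ → p δ ∈ F δ := fun {δ} h =>
    subset_closure ⟨δ, ⟨le_rfl, h⟩, rfl⟩
  -- Step 1: find a point in all the F δ.
  have step1 : ∃ x : X, ∀ δ < μ, x ∈ F δ := by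
    by_contra hcon
    push_neg at hcon
    set g : μ.ToType → Set X := fun t => (F ((Ordinal.ToType.mk (o := μ)).symm t).1)ᶜ with hg
    set 𝒰 : Set (Set X) := Set.range g with h𝒰
    have hUopen : ∀ U ∈ 𝒰, IsOpen U := by
      rintro U ⟨t, rfl⟩; exact isClosed_closure.isOpen_compl
    have hUcover : ⋃₀ 𝒰 = Set.univ := by
      ext x
      simp only [mem_sUnion, mem_univ, iff_true]
      obtain ⟨δ, hδ, hxδ⟩ := hcon x
      refine ⟨g (Ordinal.ToType.mk (o := μ) ⟨δ, hδ⟩), ⟨_, rfl⟩, ?_⟩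
      simpa [hg] using hxδ
    have key : ∃ 𝒱 ⊆ 𝒰, #𝒱 ≤ κ ∧ ⋃₀ 𝒱 = Set.univ := by
      have hle : #𝒰 ≤ Order.succ κ := by
        calc #𝒰 ≤ #μ.ToType := Cardinal.mk_range_le
          _ = μ.card := Cardinal.mk_toType μ
          _ = Order.succ κ := Cardinal.card_ord _
      rcases eq_or_lt_of_le hle with h | h
      · exact hcomp 𝒰 hUopen h hUcover
      · exact ⟨𝒰, subset_rfl, Order.lt_succ_iff.mp h, hUcover⟩
    obtain ⟨𝒱, h𝒱U, h𝒱card, h𝒱cover⟩ := key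
    have hidx : ∀ V : 𝒱, ∃ δ < μ, (V : Set X) = (F δ)ᶜ := by
      rintro ⟨V, hV⟩
      obtain ⟨t, rfl⟩ := h𝒱U hV
      exact ⟨_, ((Ordinal.ToType.mk (o := μ)).symm t).2, rfl⟩
    choose f hfμ hfV using hidx
    have hsup : (⨆ V, f V) < μ := by
      apply Ordinal.iSup_lt_ord _ hfμ
      rw [hcof]
      exact h𝒱card.trans_lt (Order.lt_succ κ)
    have hpδ : p (⨆ V, f V) ∈ F (⨆ V, f V) := hmem hsup
    have hmem' : p (⨆ V, f V) ∈ ⋃₀ 𝒱 := by rw [h𝒱cover]; trivial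
    obtain ⟨V, hV, hpV⟩ := hmem'
    have hpV' : p (⨆ V, f V) ∈ (F (f ⟨V, hV⟩))ᶜ := by
      have h := hfV ⟨V, hV⟩
      simp only [Subtype.coe_mk] at h
      rw [← h]; exact hpV
    exact hpV' (hFanti (Ordinal.le_iSup f ⟨V, hV⟩) hpδ)
  obtain ⟨x, hx⟩ := step1
  -- Step 2: use tightness to contradict freeness.
  have hx0 : x ∈ closure (p '' Set.Ico 0 μ) := hx 0 hlim.pos
  obtain ⟨B, hBsub, hBcard, hxB⟩ := ht _ x hx0
  have hidx : ∀ b : B, ∃ δ < μ, p δ = (b : X) := by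
    rintro ⟨b, hb⟩
    obtain ⟨δ, hδ, rfl⟩ := hBsub hb
    exact ⟨δ, hδ.2, rfl⟩
  choose ι hιμ hιp using hidx
  have hsup : (⨆ b, Order.succ (ι b)) < μ := by
    apply Ordinal.iSup_lt_ord _ (fun b => hlim.succ_lt (hιμ b))
    rw [hcof]
    exact hBcard.trans_lt (Order.lt_succ κ)
  have hB' : B ⊆ p '' Set.Iio (⨆ b, Order.succ (ι b)) := by
    intro b hb
    refine ⟨ι ⟨b, hb⟩, ?_, hιp ⟨b, hb⟩⟩
    exact lt_of_lt_of_le (Order.lt_succ (ι ⟨b, hb⟩)) (Ordinal.le_iSup (fun b => Order.succ (ι b)) ⟨b, hb⟩)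
  have h1 : x ∈ closure (p '' Set.Iio (⨆ b, Order.succ (ι b))) :=
    closure_mono hB' hxB
  have h2 : x ∈ F (⨆ b, Order.succ (ι b)) := hx _ hsup
  have := hp _ hsup
  rw [Set.eq_empty_iff_forall_notMem] at this
  exact this x ⟨h1, h2⟩
end

section
/- Let X be a regular space with a subset Y such that Y = ∪{cl(A) : A ⊆ Y, |A| ≤ κ} (closure taken in X), and suppose Y (as a subspace) is initially κ-compact and X has no free sequence of length κ⁺. Then Y is closed in X. -/
open Cardinal Set

theorem aux_mk_image_Iio_le {α : Type u} (q : Ordinal.{u} → α) (o : Ordinal.{u}) :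
    #(q '' Set.Iio o) ≤ o.card := by
  have h1 : Cardinal.lift.{u+1} #(q '' Set.Iio o) ≤ Cardinal.lift.{u} #(Set.Iio o) :=
    Cardinal.mk_image_le_lift
  rw [Ordinal.mk_Iio_ordinal, Cardinal.lift_lift] at h1
  rwa [Cardinal.lift_le] at h1

/-- Let `X` be regular, `Y ⊆ X` with `Y = ⋃ {cl A : A ⊆ Y, |A| ≤ κ}`,
`Y` initially `κ`-compact (with respect to covers by open subsets of `X`),
and suppose `X` has no free sequence of length `κ⁺`. Then `Y` is closed. -/
theorem closed_of_kappa_closure (X : Type u) [TopologicalSpace X] [T3Space X]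
    (κ : Cardinal.{u}) (hκ : ℵ₀ ≤ κ) (Y : Set X)
    (hY : Y = ⋃₀ {C : Set X | ∃ A : Set X, A ⊆ Y ∧ #A ≤ κ ∧ C = closure A})
    (hcomp : ∀ 𝒰 : Set (Set X), (∀ U ∈ 𝒰, IsOpen U) → #𝒰 ≤ κ → Y ⊆ ⋃₀ 𝒰 →
      ∃ 𝒱 ⊆ 𝒰, 𝒱.Finite ∧ Y ⊆ ⋃₀ 𝒱)
    (hfree : ¬ ∃ p : Ordinal.{u} → X, IsFreeSeq ((Order.succ κ).ord) p) :
    IsClosed Y := by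
  by_contra hcl
  obtain ⟨x, hxcl, hxY⟩ : ∃ x, x ∈ closure Y ∧ x ∉ Y := by
    by_contra h
    push_neg at h
    exact hcl (isClosed_of_closure_subset h)
  haveI : Nonempty X := ⟨x⟩
  set μ : Ordinal.{u} := (Order.succ κ).ord with hμ
  have hμlim : Order.IsSuccLimit μ := Cardinal.isSuccLimit_ord (hκ.trans (Order.le_succ κ))
  -- cardinality bound for ordinals below μ
  have key : ∀ o : Ordinal.{u}, o < μ → o.card ≤ κ := fun o ho =>
    Order.lt_succ_iff.mp (Cardinal.lt_ord.mp ho)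
  have hsubY : ∀ A : Set X, A ⊆ Y → #A ≤ κ → closure A ⊆ Y := by
    intro A hA hAc
    rw [hY]
    exact subset_sUnion_of_mem ⟨A, hA, hAc, rfl⟩
  have hxA : ∀ A : Set X, A ⊆ Y → #A ≤ κ → x ∉ closure A :=
    fun A hA hAc h => hxY (hsubY A hA hAc h)
  -- separation: for each A, open V ∋ x with cl V ⊆ U and cl U disjoint from cl A
  have sep : ∀ A : Set X, ∃ U V : Set X, IsOpen V ∧ x ∈ V ∧ closure V ⊆ U ∧
      (A ⊆ Y → #A ≤ κ → closure U ∩ closure A = ∅) := by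
    intro A
    by_cases h : A ⊆ Y ∧ #A ≤ κ
    · have hx : x ∉ closure A := hxA A h.1 h.2
      have h1 : (closure A)ᶜ ∈ nhds x := isClosed_closure.isOpen_compl.mem_nhds hx
      obtain ⟨t, ht, htc, hts⟩ := exists_mem_nhds_isClosed_subset h1
      have hUx : x ∈ interior t := mem_interior_iff_mem_nhds.mpr ht
      have hUcl : closure (interior t) ⊆ (closure A)ᶜ :=
        (closure_minimal interior_subset htc).trans hts
      obtain ⟨t', ht', htc', hts'⟩ :=
        exists_mem_nhds_isClosed_subset (isOpen_interior.mem_nhds hUx)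
      refine ⟨interior t, interior t', isOpen_interior,
        mem_interior_iff_mem_nhds.mpr ht',
        (closure_minimal interior_subset htc').trans hts', fun _ _ => ?_⟩
      rw [Set.eq_empty_iff_forall_notMem]
      intro z hz
      exact hUcl hz.1 hz.2
    · exact ⟨Set.univ, Set.univ, isOpen_univ, Set.mem_univ x, Set.subset_univ _,
        fun h1 h2 => absurd ⟨h1, h2⟩ h⟩
  choose Ufn Vfn hVopen hxV hVU hUsep using sep
  -- the recursive construction of the free sequence
  set p : Ordinal.{u} → X := Ordinal.lt_wf.fix
    (fun δ ih => Classical.epsilon (fun z => z ∈ Y ∩ ⋂ β ∈ Set.Iic δ,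
      Ufn ((fun γ => if h : γ < δ then ih γ h else x) '' Set.Iio β))) with hpdef
  have hpS : ∀ δ, p δ = Classical.epsilon
      (fun z => z ∈ Y ∩ ⋂ β ∈ Set.Iic δ, Ufn (p '' Set.Iio β)) := by
    intro δ
    have hfix : p δ = Classical.epsilon (fun z => z ∈ Y ∩ ⋂ β ∈ Set.Iic δ,
        Ufn ((fun γ => if h : γ < δ then p γ else x) '' Set.Iio β)) := by
      rw [hpdef]
      exact Ordinal.lt_wf.fix_eq _ δ
    have hset : (⋂ β ∈ Set.Iic δ,
        Ufn ((fun γ => if h : γ < δ then p γ else x) '' Set.Iio β))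
        = ⋂ β ∈ Set.Iic δ, Ufn (p '' Set.Iio β) := by
      apply Set.iInter₂_congr
      intro β hβ
      exact congrArg Ufn (Set.image_congr fun γ hγ => dif_pos (lt_of_lt_of_le hγ hβ))
    rw [hfix, hset]
  -- the defining set is nonempty, so p δ lands in it
  have hmem : ∀ δ, δ < μ → p δ ∈ Y ∩ ⋂ β ∈ Set.Iic δ, Ufn (p '' Set.Iio β) := by
    intro δ hδ
    have hne : ∃ z, z ∈ Y ∩ ⋂ β ∈ Set.Iic δ, Ufn (p '' Set.Iio β) := by
      by_contra hS
      push_neg at hS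
      have hop : ∀ U ∈ (fun β => (closure (Vfn (p '' Set.Iio β)))ᶜ) '' Set.Iic δ,
          IsOpen U := by
        rintro _ ⟨β, -, rfl⟩
        exact isClosed_closure.isOpen_compl
      have hcardU : #((fun β => (closure (Vfn (p '' Set.Iio β)))ᶜ) '' Set.Iic δ) ≤ κ := by
        have hIic : Set.Iic δ = Set.Iio (Order.succ δ) := by
          ext γ
          simp [Order.lt_succ_iff]
        rw [hIic]
        exact (aux_mk_image_Iio_le _ _).trans (key _ (hμlim.succ_lt hδ))
      have hcover : Y ⊆ ⋃₀ ((fun β => (closure (Vfn (p '' Set.Iio β)))ᶜ) '' Set.Iic δ) := by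
        intro y hy
        have hni : y ∉ ⋂ β ∈ Set.Iic δ, Ufn (p '' Set.Iio β) := fun h => hS y ⟨hy, h⟩
        simp only [Set.mem_iInter, not_forall] at hni
        obtain ⟨β, hβ, hyU⟩ := hni
        exact ⟨_, ⟨β, hβ, rfl⟩, fun hc => hyU (hVU _ hc)⟩
      obtain ⟨𝒱, h𝒱U, h𝒱fin, h𝒱cov⟩ := hcomp _ hop hcardU hcover
      choose! b hb1 hb2 using fun W (hW : W ∈ 𝒱) => h𝒱U hW
      have hNopen : IsOpen (⋂ W ∈ 𝒱, Vfn (p '' Set.Iio (b W))) :=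
        h𝒱fin.isOpen_biInter (fun W _ => hVopen _)
      have hxN : x ∈ ⋂ W ∈ 𝒱, Vfn (p '' Set.Iio (b W)) :=
        Set.mem_iInter₂.mpr fun W _ => hxV _
      obtain ⟨y, hyN, hyY⟩ := (mem_closure_iff.mp hxcl) _ hNopen hxN
      obtain ⟨W, hW𝒱, hyW⟩ := h𝒱cov hyY
      have hyV : y ∈ Vfn (p '' Set.Iio (b W)) := Set.mem_iInter₂.mp hyN W hW𝒱
      rw [← hb2 W hW𝒱] at hyW
      exact hyW (subset_closure hyV)
    rw [hpS δ]
    exact Classical.epsilon_spec hne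
  -- the constructed sequence is free of length μ, contradiction
  apply hfree
  refine ⟨p, fun δ hδ => ?_⟩
  have hAY : p '' Set.Iio δ ⊆ Y := by
    rintro _ ⟨γ, hγ, rfl⟩
    exact (hmem γ (hγ.trans hδ)).1
  have hAc : #(p '' Set.Iio δ) ≤ κ := (aux_mk_image_Iio_le p δ).trans (key δ hδ)
  have hdisj := hUsep (p '' Set.Iio δ) hAY hAc
  have hsub : p '' Set.Ico δ μ ⊆ Ufn (p '' Set.Iio δ) := by
    rintro _ ⟨β, ⟨hδβ, hβμ⟩, rfl⟩
    exact Set.mem_iInter₂.mp (hmem β hβμ).2 δ hδβ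
  rw [Set.eq_empty_iff_forall_notMem]
  intro z hz
  have hz2 : z ∈ closure (Ufn (p '' Set.Iio δ)) := closure_mono hsub hz.2
  exact Set.eq_empty_iff_forall_notMem.mp hdisj z ⟨hz2, hz.1⟩
end

section
/- Let κ be an infinite cardinal and σ = σ_κ as defined (σ(0)=0, σ(1)=κ, σ(α+1)=σ(α)+|σ(α)| for α>0, continuous at limits). If δ has σ-normal form with last term σ(α_{n-1}) where α_{n-1} is a limit ordinal, then the set {β < α_{n-1} : γ(γ(δ) + σ(β)) = γ(δ)} is cofinal in α_{n-1}, where γ = γ_κ is the associated regressive function. -/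
open Cardinal Set

lemma foldr_add_aux (L : List Ordinal) (c : Ordinal) :
    L.foldr (· + ·) 0 + c = L.foldr (· + ·) c := by
  induction L with
  | nil => simp
  | cons a L ih => simp only [List.foldr_cons, add_assoc, ih]

lemma sigma_mono (κ : Cardinal.{0})
    (σ : Ordinal.{0} → Ordinal.{0})
    (hσ0 : σ 0 = 0) (hσ1 : σ 1 = κ.ord)
    (hσs : ∀ α : Ordinal, 0 < α → σ (α + 1) = σ α + ((σ α).card).ord)
    (hσl : ∀ β : Ordinal, Order.IsSuccLimit β → σ β = sSup (σ '' Set.Iio β)) :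
    Monotone σ := by
  have key : ∀ α β : Ordinal, β ≤ α → σ β ≤ σ α := by
    intro α
    induction α using Ordinal.limitRecOn with
    | zero => intro β hβ; simp_all [nonpos_iff_eq_zero.mp hβ]
    | add_one a ih =>
      intro β hβ
      rcases eq_or_lt_of_le hβ with rfl | h
      · rfl
      · have hβa : β ≤ a := Order.lt_succ_iff.mp (by simpa using h)
        have h1 : σ a ≤ σ (a + 1) := by
          rcases eq_or_lt_of_le (zero_le (a := a)) with rfl | ha
          · simp [hσ0]
          · rw [hσs a ha]; exact le_self_add
        exact (ih β hβa).trans h1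
    | limit a hlim ih =>
      intro β hβ
      rcases eq_or_lt_of_le hβ with rfl | h
      · rfl
      · rw [hσl a hlim]
        exact le_csSup Ordinal.bddAbove_of_small ⟨β, h, rfl⟩
  exact fun a b h => key b a h

/-- If the last term of the `σ`-normal form of `δ` is `σ α` with `α` a limit
ordinal, then `{β < α : γ (γ δ + σ β) = γ δ}` is cofinal in `α`. -/
theorem gamma_cofinal_at_limit (κ : Cardinal.{0}) (hκ : ℵ₀ ≤ κ)
    (σ : Ordinal.{0} → Ordinal.{0})
    (hσ0 : σ 0 = 0) (hσ1 : σ 1 = κ.ord)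
    (hσs : ∀ α : Ordinal, 0 < α → σ (α + 1) = σ α + ((σ α).card).ord)
    (hσl : ∀ β : Ordinal, Order.IsSuccLimit β → σ β = sSup (σ '' Set.Iio β))
    (γ : Ordinal → Ordinal)
    (hγ : ∀ (δ : Ordinal) (l : List Ordinal) (Δ : Ordinal),
      NormalForm κ σ δ l Δ → γ δ = (l.dropLast.map σ).foldr (· + ·) 0) :
    ∀ (δ : Ordinal) (l : List Ordinal) (Δ : Ordinal) (α : Ordinal),
      NormalForm κ σ δ l Δ → l.getLast? = some α → Order.IsSuccLimit α →
      ∀ β₀ < α, ∃ β, β₀ ≤ β ∧ β < α ∧ γ (γ δ + σ β) = γ δ := by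
  intro δ l Δ α hNF hlast hlim β₀ hβ₀
  have hmono := sigma_mono κ σ hσ0 hσ1 hσs hσl
  obtain ⟨hδ, hchain, hpos, hΔ⟩ := hNF
  have hne : l ≠ [] := by intro h; rw [h] at hlast; simp at hlast
  have hα : l.getLast hne = α := by
    rw [List.getLast?_eq_getLast hne, Option.some_inj] at hlast
    exact hlast
  have hdecomp : l.dropLast ++ [α] = l := by
    rw [← hα]; exact List.dropLast_append_getLast hne
  set l' := l.dropLast with hl'
  set β := β₀ + 1 with hβdef
  have hβα : β < α := hlim.succ_lt hβ₀
  have hβpos : 0 < β := by rw [hβdef, Ordinal.add_one_eq_succ]; exact Ordinal.succ_pos β₀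
  have hcard : (σ β).card ≤ (σ α).card := Ordinal.card_le_card (hmono hβα.le)
  have hγδ : γ δ = (l'.map σ).foldr (· + ·) 0 := hγ δ l Δ ⟨hδ, hchain, hpos, hΔ⟩
  have hκpos : (0 : Ordinal) < κ.ord :=
    lt_of_lt_of_le (by rw [Cardinal.ord_aleph0]; exact Ordinal.omega0_pos)
      (Cardinal.ord_le_ord.2 hκ)
  have hchain' : (l' ++ [α]).Chain' (fun a b => (σ b).card < (σ a).card) := by
    rw [hdecomp]; exact hchain
  rw [List.Chain', List.isChain_append] at hchain'
  have hNF2 : NormalForm κ σ (γ δ + σ β) (l' ++ [β]) 0 := by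
    refine ⟨?_, ?_, ?_, hκpos⟩
    · rw [hγδ, List.map_append, List.foldr_append]
      simp [foldr_add_aux]
    · rw [List.Chain', List.isChain_append]
      refine ⟨hchain'.1, List.isChain_singleton _, ?_⟩
      intro x hx y hy
      simp only [List.head?_cons, Option.mem_def, Option.some_inj] at hy
      subst hy
      exact lt_of_le_of_lt hcard (hchain'.2.2 x hx α (by simp))
    · intro a ha
      rw [List.getLast?_concat, Option.some_inj] at ha
      exact ha ▸ hβpos
  have h2 := hγ _ _ _ hNF2
  rw [List.dropLast_concat] at h2
  exact ⟨β, le_of_lt (lt_add_one β₀), hβα, by rw [h2, hγδ]⟩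
end

section
/- An ordinal δ satisfies: δ = κ·ε for some ordinal ε if and only if the σ_κ-normal form of δ has Δ = 0, where κ is an infinite cardinal. -/
open Cardinal Set

theorem aux_ord_pos {κ : Cardinal.{0}} (hκ : ℵ₀ ≤ κ) : 0 < κ.ord := by
  have h := Cardinal.ord_le_ord.mpr hκ
  rw [Cardinal.ord_aleph0] at h
  exact Ordinal.omega0_pos.trans_le h

/-- The sup of a bounded set of multiples of `c` is a multiple of `c`. -/
theorem aux_dvd_sSup {c : Ordinal} (hc : 0 < c) {S : Set Ordinal} (hb : BddAbove S)
    (h : ∀ s ∈ S, c ∣ s) : c ∣ sSup S := by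
  rcases S.eq_empty_or_nonempty with rfl | hS
  · rw [csSup_empty]; exact dvd_zero c
  rw [Ordinal.dvd_iff_mod_eq_zero]
  by_contra hr
  have hr' : 0 < sSup S % c := pos_iff_ne_zero.mpr hr
  have key := Ordinal.div_add_mod (sSup S) c
  have h1 : c * (sSup S / c) < sSup S := by
    conv_rhs => rw [← key]
    simpa using hr'
  obtain ⟨s, hsS, hs⟩ := exists_lt_of_lt_csSup hS h1
  obtain ⟨m, rfl⟩ := h s hsS
  have hq : sSup S / c < m := (mul_lt_mul_iff_right₀ hc).mp hs
  have h2 : c * m ≤ sSup S := le_csSup hb hsS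
  have h3 : c * (sSup S / c + 1) ≤ c * m :=
    mul_le_mul_right (Order.add_one_le_of_lt hq) c
  have h4 : sSup S < c * (sSup S / c + 1) := by
    conv_lhs => rw [← key]
    rw [mul_add, mul_one]
    exact add_lt_add_right (Ordinal.mod_lt _ hc.ne') _
  exact absurd (h4.trans_le (h3.trans h2)) (lt_irrefl _)

/-- For infinite cardinals `κ ≤ lam`, `lam.ord` is a multiple of `κ.ord`. -/
theorem aux_ord_dvd_ord {κ lam : Cardinal.{0}} (hκ : ℵ₀ ≤ κ) (h : κ ≤ lam) :
    κ.ord ∣ lam.ord := by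
  have hlam : ℵ₀ ≤ lam := hκ.trans h
  have hκ0 : 0 < κ.ord := aux_ord_pos hκ
  have key := Ordinal.div_add_mod lam.ord κ.ord
  have hmod : lam.ord % κ.ord < κ.ord := Ordinal.mod_lt _ hκ0.ne'
  have hle : κ.ord * (lam.ord / κ.ord) ≤ lam.ord := by
    conv_rhs => rw [← key]
    exact le_add_of_nonneg_right zero_le
  rcases lt_or_eq_of_le hle with hlt | heq
  · exfalso
    have := Ordinal.isPrincipal_add_ord hlam hlt
      (hmod.trans_le (Cardinal.ord_le_ord.mpr h))
    exact absurd key (ne_of_lt this)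
  · exact ⟨_, heq.symm⟩

section Sigma

variable {κ : Cardinal.{0}} {σ : Ordinal.{0} → Ordinal.{0}}

theorem aux_mono (hκ : ℵ₀ ≤ κ)
    (hσ0 : σ 0 = 0) (hσ1 : σ 1 = κ.ord)
    (hσs : ∀ α : Ordinal, 0 < α → σ (α + 1) = σ α + ((σ α).card).ord)
    (hσl : ∀ β : Ordinal, Order.IsSuccLimit β → σ β = sSup (σ '' Set.Iio β)) :
    StrictMono σ := by
  have hκ0 : 0 < κ.ord := aux_ord_pos hκ
  have main : ∀ β α, α < β → σ α < σ β := by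
    intro β
    induction β using Ordinal.induction with
    | h β IH =>
    intro α hαβ
    rcases Ordinal.zero_or_succ_or_isSuccLimit β with rfl | ⟨γ, rfl⟩ | hβ
    · exact absurd hαβ (not_lt_zero (a := α))
    · have hγβ : γ < Order.succ γ := Order.lt_succ γ
      have hstep : σ γ < σ (Order.succ γ) := by
        rcases eq_zero_or_pos γ with rfl | hγ
        · have : Order.succ (0 : Ordinal) = 1 := by
            rw [← Ordinal.add_one_eq_succ, zero_add]
          rw [this, hσ0, hσ1]; exact hκ0
        · have hpos : 0 < σ γ := by
            have := IH γ hγβ 0 hγ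
            rwa [hσ0] at this
          have hcard : 0 < ((σ γ).card).ord := by
            rcases eq_zero_or_pos (((σ γ).card).ord) with h0 | h
            · exfalso
              have : (σ γ).card = 0 := by
                by_contra hc
                exact hc (Cardinal.ord_eq_zero.mp h0)
              rw [Ordinal.card_eq_zero] at this
              exact hpos.ne' this
            · exact h
          rw [← Ordinal.add_one_eq_succ, hσs γ hγ]
          calc σ γ = σ γ + 0 := (add_zero _).symm
            _ < σ γ + ((σ γ).card).ord := add_lt_add_right hcard _
      rw [Order.lt_succ_iff] at hαβ
      rcases eq_or_lt_of_le hαβ with rfl | hαγ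
      · exact hstep
      · exact (IH γ hγβ α hαγ).trans hstep
    · have h1 : α + 1 < β := by
        rw [Ordinal.add_one_eq_succ]
        exact hβ.succ_lt hαβ
      have h2 : σ α < σ (α + 1) := IH (α + 1) h1 α (lt_add_one α)
      have h3 : σ (α + 1) ≤ sSup (σ '' Set.Iio β) :=
        le_csSup Ordinal.bddAbove_of_small ⟨α + 1, h1, rfl⟩
      rw [hσl β hβ]
      exact h2.trans_le h3
  exact fun a b hab => main b a hab

theorem aux_dvd_sigma (hκ : ℵ₀ ≤ κ)
    (hσ0 : σ 0 = 0) (hσ1 : σ 1 = κ.ord)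
    (hσs : ∀ α : Ordinal, 0 < α → σ (α + 1) = σ α + ((σ α).card).ord)
    (hσl : ∀ β : Ordinal, Order.IsSuccLimit β → σ β = sSup (σ '' Set.Iio β))
    (hmono : StrictMono σ) :
    ∀ α : Ordinal, κ.ord ∣ σ α := by
  have hκ0 : 0 < κ.ord := aux_ord_pos hκ
  intro α
  induction α using Ordinal.induction with
  | h α IH =>
  rcases Ordinal.zero_or_succ_or_isSuccLimit α with rfl | ⟨γ, rfl⟩ | hα
  · rw [hσ0]; exact dvd_zero _
  · rcases eq_zero_or_pos γ with rfl | hγ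
    · have : Order.succ (0 : Ordinal) = 1 := by
        rw [← Ordinal.add_one_eq_succ, zero_add]
      rw [this, hσ1]
    · rw [← Ordinal.add_one_eq_succ, hσs γ hγ]
      obtain ⟨a, ha⟩ := IH γ (Order.lt_succ γ)
      have hκle : κ ≤ (σ γ).card := by
        have h1 : κ.ord ≤ σ γ := by
          rw [← hσ1]
          exact hmono.monotone (Order.one_le_iff_pos.mpr hγ)
        calc κ = (κ.ord).card := (Cardinal.card_ord κ).symm
          _ ≤ (σ γ).card := Ordinal.card_le_card h1
      obtain ⟨b, hb⟩ := aux_ord_dvd_ord hκ hκle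
      exact ⟨a + b, by rw [mul_add, ← ha, ← hb]⟩
  · rw [hσl α hα]
    refine aux_dvd_sSup hκ0 Ordinal.bddAbove_of_small ?_
    rintro s ⟨γ, hγ, rfl⟩
    exact IH γ hγ

theorem aux_forward (hκ : ℵ₀ ≤ κ)
    (hσ0 : σ 0 = 0) (hσ1 : σ 1 = κ.ord)
    (hσs : ∀ α : Ordinal, 0 < α → σ (α + 1) = σ α + ((σ α).card).ord)
    (hσl : ∀ β : Ordinal, Order.IsSuccLimit β → σ β = sSup (σ '' Set.Iio β))
    (hmono : StrictMono σ) (hdvd : ∀ α : Ordinal, κ.ord ∣ σ α) :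
    ∀ δ : Ordinal, κ.ord ∣ δ → ∃ l : List Ordinal, NormalForm κ σ δ l 0 := by
  have hκ0 : 0 < κ.ord := aux_ord_pos hκ
  intro δ
  induction δ using Ordinal.induction with
  | h δ IH =>
  intro hδ
  rcases eq_or_ne δ 0 with rfl | hδ0
  · exact ⟨[], rfl, List.isChain_nil, by simp, hκ0⟩
  · have hκδ : κ.ord ≤ δ := by
      obtain ⟨e, rfl⟩ := hδ
      have he : (1 : Ordinal) ≤ e := by
        rw [Ordinal.one_le_iff_ne_zero]
        rintro rfl; simp at hδ0
      calc κ.ord = κ.ord * 1 := (mul_one _).symm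
        _ ≤ κ.ord * e := mul_le_mul_right he _
    set A : Set Ordinal := {α | σ α ≤ δ} with hA
    have h1A : 1 ∈ A := by rw [hA, mem_setOf_eq, hσ1]; exact hκδ
    have hAne : A.Nonempty := ⟨1, h1A⟩
    have hAbdd : BddAbove A := by
      refine ⟨δ, fun α hα => ?_⟩
      exact (hmono.le_apply).trans hα
    set α₀ := sSup A with hα₀def
    have hmax : ∀ β ∈ A, β ≤ α₀ := fun β hβ => le_csSup hAbdd hβ
    have h1α₀ : 1 ≤ α₀ := hmax 1 h1A
    have hα₀pos : 0 < α₀ := zero_lt_one.trans_le h1α₀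
    have hσα₀ : σ α₀ ≤ δ := by
      rcases Ordinal.zero_or_succ_or_isSuccLimit α₀ with h0 | ⟨γ, hγ⟩ | hlim
      · exact absurd h0 hα₀pos.ne'
      · have hγlt : γ < sSup A := by
          rw [← hα₀def, ← hγ]; exact Order.lt_succ γ
        obtain ⟨a, haA, hga⟩ := exists_lt_of_lt_csSup hAne hγlt
        have ha1 : Order.succ γ ≤ a := Order.succ_le_of_lt hga
        have ha2 : a ≤ α₀ := hmax a haA
        have : a = α₀ := le_antisymm ha2 (hγ ▸ ha1)
        rwa [← this]
      · rw [hσl α₀ hlim]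
        refine csSup_le ⟨σ 0, 0, hα₀pos, rfl⟩ ?_
        rintro s ⟨β, hβ, rfl⟩
        obtain ⟨a, haA, hβa⟩ := exists_lt_of_lt_csSup hAne hβ
        exact (hmono hβa).le.trans haA
    set δ' := δ - σ α₀ with hδ'def
    have hsum : σ α₀ + δ' = δ := Ordinal.add_sub_cancel_of_le hσα₀
    have hδ'lt : δ' < ((σ α₀).card).ord := by
      by_contra hge
      push_neg at hge
      have hsle : σ (α₀ + 1) ≤ δ := by
        rw [hσs α₀ hα₀pos]
        calc σ α₀ + ((σ α₀).card).ord ≤ σ α₀ + δ' := add_le_add_right hge _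
          _ = δ := hsum
      have := hmax _ hsle
      exact absurd this (by simp)
    have hδ'dvd : κ.ord ∣ δ' := by
      obtain ⟨e, he⟩ := hδ
      obtain ⟨m, hm⟩ := hdvd α₀
      have hme : m ≤ e := by
        by_contra hlt
        push_neg at hlt
        have : κ.ord * e < κ.ord * m := (mul_lt_mul_iff_right₀ hκ0).mpr hlt
        rw [← he, ← hm] at this
        exact absurd (hσα₀.trans_lt this) (lt_irrefl _)
      refine ⟨e - m, ?_⟩
      have h2 : κ.ord * m + κ.ord * (e - m) = κ.ord * m + δ' := by
        rw [← mul_add, Ordinal.add_sub_cancel_of_le hme, ← he, ← hsum, hm]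
      exact (add_left_cancel_iff.mp h2).symm
    have hδ'δ : δ' < δ :=
      hδ'lt.trans_le ((Cardinal.ord_card_le _).trans hσα₀)
    obtain ⟨l', h1', h2', h3', _⟩ := IH δ' hδ'δ hδ'dvd
    refine ⟨α₀ :: l', ?_, ?_, ?_, hκ0⟩
    · simp only [List.map_cons, List.foldr_cons]
      rw [← h1']
      exact hsum.symm
    · rw [List.Chain', List.isChain_cons]
      refine ⟨?_, h2'⟩
      intro b hb
      have hble : σ b ≤ δ' := by
        cases l' with
        | nil => simp at hb
        | cons c t =>
          simp only [List.head?_cons, Option.mem_def, Option.some.injEq] at hb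
          subst hb
          rw [h1']
          simp only [List.map_cons, List.foldr_cons]
          calc σ c = σ c + 0 := (add_zero _).symm
            _ ≤ σ c + (t.map σ).foldr (· + ·) 0 :=
              add_le_add_right zero_le _
      calc (σ b).card ≤ δ'.card := Ordinal.card_le_card hble
        _ < (σ α₀).card := Cardinal.lt_ord.mp hδ'lt
    · cases l' with
      | nil =>
        intro a ha
        simp only [List.getLast?_singleton, Option.some.injEq] at ha
        subst ha
        exact hα₀pos
      | cons c t =>
        intro a ha
        rw [List.getLast?_cons_cons] at ha
        exact h3' a ha

theorem aux_backward (hdvd : ∀ α : Ordinal, κ.ord ∣ σ α) :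
    ∀ l : List Ordinal, κ.ord ∣ (l.map σ).foldr (· + ·) 0 := by
  intro l
  induction l with
  | nil => simpa using dvd_zero κ.ord
  | cons a t ih =>
    simp only [List.map_cons, List.foldr_cons]
    obtain ⟨x, hx⟩ := hdvd a
    obtain ⟨y, hy⟩ := ih
    exact ⟨x + y, by rw [mul_add, ← hx, ← hy]⟩

end Sigma

/-- An ordinal `δ` is a multiple of `κ` iff its `σ_κ`-normal form has `Δ = 0`. -/
theorem multiple_of_kappa_iff_normalForm_delta_zero (κ : Cardinal.{0}) (hκ : ℵ₀ ≤ κ)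
    (σ : Ordinal.{0} → Ordinal.{0})
    (hσ0 : σ 0 = 0) (hσ1 : σ 1 = κ.ord)
    (hσs : ∀ α : Ordinal, 0 < α → σ (α + 1) = σ α + ((σ α).card).ord)
    (hσl : ∀ β : Ordinal, Order.IsSuccLimit β → σ β = sSup (σ '' Set.Iio β)) :
    ∀ δ : Ordinal, (∃ ε : Ordinal, δ = κ.ord * ε) ↔
      (∃ l : List Ordinal, NormalForm κ σ δ l 0) := by
  have hmono : StrictMono σ := aux_mono hκ hσ0 hσ1 hσs hσl
  have hdvd : ∀ α : Ordinal, κ.ord ∣ σ α := aux_dvd_sigma hκ hσ0 hσ1 hσs hσl hmono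
  intro δ
  constructor
  · rintro ⟨ε, rfl⟩
    exact aux_forward hκ hσ0 hσ1 hσs hσl hmono hdvd _ ⟨ε, rfl⟩
  · rintro ⟨l, h1, -, -, -⟩
    obtain ⟨e, he⟩ := aux_backward hdvd l
    exact ⟨e, by rw [h1, he]⟩
end
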